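/- arXiv:1801.08972 — 4 statements merged into one kernel-verified Lean document; each statement's English description precedes it below -/
import Mathlib

section
/- No cograph has an adjacency eigenvalue strictly between -1 and 0: if G is a finite simple graph containing no induced path on four vertices, then every real eigenvalue λ of the adjacency matrix of G satisfies λ ≤ -1 or λ ≥ 0. -/
open Polynomial

/-- The characteristic polynomial of the adjacency matrix of a finite simple graph. -/
noncomputable def graphCharpoly {V : Type} [Fintype V] (G : SimpleGraph V) : Polynomial ℝ :=
  letI := Classical.decEq V
  letI : DecidableRel G.Adj := Classical.decRel _
  (SimpleGraph.adjMatrix ℝ G).charpoly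

/-- The multiplicity `m(lam)` of `lam` as an eigenvalue of `G`, i.e. its multiplicity as a
root of the characteristic polynomial of the adjacency matrix of `G`. -/
noncomputable def eigMult {V : Type} [Fintype V] (G : SimpleGraph V) (lam : ℝ) : ℕ :=
  (graphCharpoly G).rootMultiplicity lam

/-- The energy of a graph: the sum of the absolute values of the eigenvalues of its
adjacency matrix, counted with multiplicity. -/
noncomputable def graphEnergy {V : Type} [Fintype V] (G : SimpleGraph V) : ℝ :=
  ((graphCharpoly G).roots.map (fun x => |x|)).sum

section Aux
open SimpleGraph Matrix

def embedOfP4 {V : Type*} (G : SimpleGraph V) (a b c d : V)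
    (hab : G.Adj a b) (hbc : G.Adj b c) (hcd : G.Adj c d)
    (hac : ¬G.Adj a c) (hbd : ¬G.Adj b d) (had : ¬G.Adj a d)
    (nac : a ≠ c) (nbd : b ≠ d) (nad : a ≠ d) :
    pathGraph 4 ↪g G where
  toFun := fun i => ![a, b, c, d] i
  inj' := by
    have nab := hab.ne
    have nbc := hbc.ne
    have ncd := hcd.ne
    have nca := nac.symm; have ndb := nbd.symm; have nda := nad.symm
    have nba := nab.symm; have ncb := nbc.symm; have ndc := ncd.symm
    intro x y h
    fin_cases x <;> fin_cases y <;> simp_all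
  map_rel_iff' := by
    have hba := hab.symm; have hcb := hbc.symm; have hdc := hcd.symm
    have hca : ¬G.Adj c a := fun h => hac h.symm
    have hdb : ¬G.Adj d b := fun h => hbd h.symm
    have hda : ¬G.Adj d a := fun h => had h.symm
    intro x y
    change G.Adj (![a, b, c, d] x) (![a, b, c, d] y) ↔ _
    fin_cases x <;> fin_cases y <;>
      simp [pathGraph_adj, Fin.ext_iff, hab, hbc, hcd, hac, hbd, had, G.irrefl,
        hba, hcb, hdc, hca, hdb, hda] <;> decide

def p4ComplEmbed {V : Type*} {G : SimpleGraph V} (f : pathGraph 4 ↪g Gᶜ) :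
    pathGraph 4 ↪g G := by
  have key : ∀ x y : Fin 4, x ≠ y → ¬(pathGraph 4).Adj x y → G.Adj (f x) (f y) := by
    intro x y hxy hadj
    have h2 : ¬Gᶜ.Adj (f x) (f y) := fun h => hadj (f.map_rel_iff.mp h)
    rw [SimpleGraph.compl_adj, not_and, not_not] at h2
    exact h2 (fun h => hxy (f.injective h))
  have key2 : ∀ x y : Fin 4, (pathGraph 4).Adj x y → ¬G.Adj (f x) (f y) := by
    intro x y hadj
    have := f.map_rel_iff.mpr hadj
    rw [SimpleGraph.compl_adj] at this
    exact this.2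
  refine embedOfP4 G (f 1) (f 3) (f 0) (f 2) ?_ ?_ ?_ ?_ ?_ ?_ ?_ ?_ ?_
  · exact key 1 3 (by decide) (by rw [pathGraph_adj]; decide)
  · exact key 3 0 (by decide) (by rw [pathGraph_adj]; decide)
  · exact key 0 2 (by decide) (by rw [pathGraph_adj]; decide)
  · exact key2 1 0 (pathGraph_adj.mpr (by decide))
  · exact key2 3 2 (pathGraph_adj.mpr (by decide))
  · exact key2 1 2 (pathGraph_adj.mpr (by decide))
  · exact fun h => (by decide : (1 : Fin 4) ≠ 0) (f.injective h)
  · exact fun h => (by decide : (3 : Fin 4) ≠ 2) (f.injective h)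
  · exact fun h => (by decide : (1 : Fin 4) ≠ 2) (f.injective h)

lemma exists_boundary_edge {V : Type*} {G : SimpleGraph V} {P : V → Prop} :
    ∀ {a w : V}, G.Walk a w → P a → ¬P w → ∃ x y, G.Adj x y ∧ P x ∧ ¬P y := by
  intro a w p
  induction p with
  | nil => intro h1 h2; exact absurd h1 h2
  | @cons u v w h p ih =>
    intro h1 h2
    by_cases hb : P v
    · exact ih hb h2
    · exact ⟨u, v, h, h1, hb⟩

lemma walk_stays {V : Type*} {G : SimpleGraph V} {S : Set V}
    (hcross : ∀ a ∈ S, ∀ b, b ∉ S → ¬G.Adj a b) :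
    ∀ {x y : V}, G.Walk x y → x ∈ S → y ∈ S := by
  intro x y p
  induction p with
  | nil => exact id
  | @cons u v w h p ih =>
    intro hx
    by_cases hb : v ∈ S
    · exact ih hb
    · exact absurd h (hcross _ hx _ hb)

lemma split_of_not_preconnected {V : Type*} {G : SimpleGraph V}
    (h : ¬G.Preconnected) :
    ∃ S : Set V, S.Nonempty ∧ Sᶜ.Nonempty ∧ ∀ a ∈ S, ∀ b ∈ Sᶜ, ¬G.Adj a b := by
  rw [SimpleGraph.Preconnected] at h
  push_neg at h
  obtain ⟨u, w, huw⟩ := h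
  refine ⟨{x | G.Reachable u x}, ⟨u, SimpleGraph.Reachable.refl u⟩, ⟨w, huw⟩, ?_⟩
  intro a ha b hb hadj
  exact hb (ha.trans hadj.reachable)

lemma first_step {V : Type*} {G : SimpleGraph V} {u w : V} (p : G.Walk u w)
    (h : u ≠ w) : ∃ x, G.Adj u x := by
  cases p with
  | nil => exact absurd rfl h
  | cons h' _ => exact ⟨_, h'⟩

lemma core_lemma {V : Type*} (G : SimpleGraph V)
    (hfree : IsEmpty (pathGraph 4 ↪g G)) (v : V)
    (hH : ¬(G.induce {w : V | w ≠ v}).Preconnected)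
    (hG : G.Preconnected) (hGc : Gᶜ.Preconnected) : False := by
  set W : Set V := {w : V | w ≠ v} with hW
  set H : SimpleGraph W := G.induce W with hHdef
  -- (i) every H-reachability class contains a G-neighbor of v
  have nbr_all : ∀ w : W, ∃ a : W, H.Reachable w a ∧ G.Adj v ↑a := by
    intro w
    by_contra hno
    push_neg at hno
    set S : Set V := Subtype.val '' {a : W | H.Reachable w a} with hS
    have hvS : v ∉ S := by
      rintro ⟨a, _, ha2⟩
      exact a.2 ha2
    have hcross : ∀ a ∈ S, ∀ b, b ∉ S → ¬G.Adj a b := by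
      rintro a ⟨a', ha', rfl⟩ b hb hadj
      by_cases hbv : b = v
      · subst hbv
        exact hno a' ha' hadj.symm
      · have hb' : (⟨b, hbv⟩ : W) ∈ {a : W | H.Reachable w a} := by
          refine ha'.trans ?_
          exact SimpleGraph.Adj.reachable (by simpa [hHdef] using hadj)
        exact hb ⟨⟨b, hbv⟩, hb', rfl⟩
    obtain ⟨p⟩ := hG ↑w v
    exact hvS (walk_stays hcross p ⟨w, SimpleGraph.Reachable.refl w, rfl⟩)
  -- get witnesses of disconnectedness of H
  rw [SimpleGraph.Preconnected] at hH
  push_neg at hH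
  obtain ⟨p, q, hpq⟩ := hH
  -- (ii) v is not adjacent to everything in W
  have hnotall : ∃ w : W, ¬G.Adj v ↑w := by
    by_contra hall
    push_neg at hall
    obtain ⟨wk⟩ := hGc v ↑q
    obtain ⟨x, h⟩ := first_step wk (fun h => q.2 h.symm)
    rw [SimpleGraph.compl_adj] at h
    rcases eq_or_ne x v with h2 | h2
    · exact h.1 h2.symm
    · exact h.2 (hall ⟨_, h2⟩)
  obtain ⟨w0, hw0⟩ := hnotall
  obtain ⟨a0, hreach, hadj0⟩ := nbr_all w0
  obtain ⟨wk⟩ := hreach.symm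
  obtain ⟨a', b', hab, hva, hvb⟩ :=
    exists_boundary_edge (P := fun x : W => G.Adj v ↑x) wk hadj0 hw0
  -- find a vertex in another component adjacent to v
  have hu0 : ∃ u0 : W, ¬H.Reachable a' u0 := by
    by_cases hr : H.Reachable a' p
    · exact ⟨q, fun h => hpq (hr.symm.trans h)⟩
    · exact ⟨p, hr⟩
  obtain ⟨u0, hu0⟩ := hu0
  obtain ⟨u1, hru, hadju⟩ := nbr_all u0
  have hnra : ¬H.Reachable a' u1 := fun h => hu0 (h.trans hru.symm)
  have hnrb : ¬H.Reachable b' u1 := fun h => hnra (hab.reachable.trans h)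
  have adjH : ∀ x y : W, G.Adj ↑x ↑y → H.Adj x y := by
    intro x y hxy; simpa [hHdef] using hxy
  refine hfree.false (embedOfP4 G ↑b' ↑a' v ↑u1 ?_ ?_ ?_ ?_ ?_ ?_ ?_ ?_ ?_)
  · exact (by simpa [hHdef] using hab.symm : G.Adj ↑b' ↑a')
  · exact hva.symm
  · exact hadju
  · exact fun h => hvb h.symm
  · exact fun h => hnra ((adjH _ _ h).reachable)
  · exact fun h => hnrb ((adjH _ _ h).reachable)
  · exact b'.2
  · exact fun h => hnra (Subtype.ext h ▸ SimpleGraph.Reachable.refl a')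
  · exact fun h => hnrb (Subtype.ext h ▸ SimpleGraph.Reachable.refl b')

lemma card_two_aux {V : Type} [Fintype V] (hcard : Fintype.card V = 2)
    {u v : V} (huv : u ≠ v) : ∀ z : V, z = u ∨ z = v := by
  classical
  intro z
  by_contra h
  push_neg at h
  obtain ⟨hz1, hz2⟩ := h
  have h3 : ({z, u, v} : Finset V).card = 3 := by
    rw [Finset.card_insert_of_notMem (by simp [hz1, hz2]),
      Finset.card_insert_of_notMem (by simp [huv]), Finset.card_singleton]
  have := Finset.card_le_univ ({z, u, v} : Finset V)
  rw [h3] at this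
  omega

lemma both_precon_false : ∀ (n : ℕ) {V : Type} [Fintype V] (G : SimpleGraph V),
    Fintype.card V = n → 2 ≤ n → IsEmpty (pathGraph 4 ↪g G) →
    G.Preconnected → Gᶜ.Preconnected → False := by
  intro n
  induction n using Nat.strong_induction_on with
  | _ n ih =>
    intro V _ G hcard hn hfree hG hGc
    classical
    have hne : Nonempty V := by
      rw [← Fintype.card_pos_iff, hcard]; omega
    obtain ⟨v⟩ := hne
    rcases eq_or_lt_of_le hn with h2 | h3
    · -- card V = 2
      obtain ⟨u, hu⟩ := Fintype.exists_ne_of_one_lt_card (by omega) v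
      have huv : G.Adj u v := by
        obtain ⟨wk⟩ := hG u v
        obtain ⟨x, hx⟩ := first_step wk hu
        rcases card_two_aux (by omega) hu x with rfl | rfl
        · exact absurd rfl hx.ne
        · exact hx
      obtain ⟨wk⟩ := hGc u v
      obtain ⟨x, hx⟩ := first_step wk hu
      rcases card_two_aux (by omega) hu x with rfl | rfl
      · exact absurd rfl hx.ne
      · rw [SimpleGraph.compl_adj] at hx
        exact hx.2 huv
    · -- card V ≥ 3
      set W : Set V := {w : V | w ≠ v} with hWdef
      set H : SimpleGraph W := G.induce W with hHdef
      have hfreeH : IsEmpty (pathGraph 4 ↪g H) :=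
        ⟨fun f => hfree.false ((SimpleGraph.Embedding.induce W).comp f)⟩
      have hcardW : Fintype.card W = n - 1 := by
        have h4 : Fintype.card W = Fintype.card V - Fintype.card {w : V // w = v} :=
          Fintype.card_subtype_compl (p := fun w => w = v)
        rw [Fintype.card_subtype_eq] at h4
        omega
      have hcompl : (Gᶜ).induce W = Hᶜ := by
        ext a b
        simp only [hHdef, SimpleGraph.comap_adj, Function.Embedding.coe_subtype,
          SimpleGraph.compl_adj, ne_eq, Subtype.ext_iff]
      by_cases hHp : H.Preconnected
      · by_cases hHcp : Hᶜ.Preconnected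
        · exact ih (n - 1) (by omega) H hcardW (by omega) hfreeH hHp hHcp
        · refine core_lemma Gᶜ ⟨fun f => hfree.false (p4ComplEmbed f)⟩ v ?_ hGc ?_
          · rw [show {w : V | w ≠ v} = W from rfl, hcompl]; exact hHcp
          · rw [compl_compl]; exact hG
      · exact core_lemma G hfree v hHp hG hGc

lemma seinsche {V : Type} [Fintype V] (G : SimpleGraph V)
    (hfree : IsEmpty (pathGraph 4 ↪g G)) (hcard : 2 ≤ Fintype.card V) :
    ∃ S : Set V, S.Nonempty ∧ Sᶜ.Nonempty ∧
      ((∀ a ∈ S, ∀ b ∈ Sᶜ, ¬G.Adj a b) ∨ (∀ a ∈ S, ∀ b ∈ Sᶜ, G.Adj a b)) := by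
  by_cases hG : G.Preconnected
  · by_cases hGc : Gᶜ.Preconnected
    · exact absurd hGc (fun h => both_precon_false _ G rfl hcard hfree hG h)
    · obtain ⟨S, h1, h2, h3⟩ := split_of_not_preconnected hGc
      refine ⟨S, h1, h2, Or.inr ?_⟩
      intro a ha b hb
      have hne : a ≠ b := fun h => hb (h ▸ ha)
      have := h3 a ha b hb
      rw [SimpleGraph.compl_adj, not_and, not_not] at this
      exact this hne
  · obtain ⟨S, h1, h2, h3⟩ := split_of_not_preconnected hG
    exact ⟨S, h1, h2, Or.inl h3⟩


lemma sum_split {V : Type} [Fintype V] (S : Set V) [DecidablePred (· ∈ S)] (f : V → ℝ) :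
    ∑ j, f j = (∑ j : S, f ↑j) + ∑ j : ↥(Sᶜ), f ↑j := by
  rw [← Equiv.sum_comp (Equiv.Set.sumCompl S) f, Fintype.sum_sum_type]
  simp

lemma mulVec_split {V : Type} [Fintype V] [DecidableEq V] (G : SimpleGraph V)
    [DecidableRel G.Adj] (t c : ℝ) (S T : Set V) [DecidablePred (· ∈ S)]
    [DecidableRel (G.induce S).Adj]
    (hT : T = Sᶜ)
    (hcross : ∀ a ∈ S, ∀ b ∈ T, G.adjMatrix ℝ a b = c) (x : V → ℝ) (i : V) (hi : i ∈ S) :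
    ((G.adjMatrix ℝ + t • 1) *ᵥ x) i =
      (((G.induce S).adjMatrix ℝ + t • 1) *ᵥ fun j : S => x ↑j) ⟨i, hi⟩
        + c * ∑ j : ↥(Sᶜ), x ↑j := by
  subst hT
  have expand : ((G.adjMatrix ℝ + t • 1) *ᵥ x) i
      = ∑ j, (G.adjMatrix ℝ + t • 1) i j * x j := by
    simp [Matrix.mulVec, dotProduct]
  rw [expand, sum_split S]
  congr 1
  · have expand2 : (((G.induce S).adjMatrix ℝ + t • 1) *ᵥ fun j : S => x ↑j) ⟨i, hi⟩
        = ∑ j : S, ((G.induce S).adjMatrix ℝ + t • 1) ⟨i, hi⟩ j * x ↑j := by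
      simp [Matrix.mulVec, dotProduct]
    rw [expand2]
    refine Finset.sum_congr rfl fun j _ => ?_
    have : (G.adjMatrix ℝ + t • 1) i ↑j = ((G.induce S).adjMatrix ℝ + t • 1) ⟨i, hi⟩ j := by
      simp [Matrix.add_apply, SimpleGraph.adjMatrix_apply, Matrix.smul_apply,
        Matrix.one_apply, SimpleGraph.comap_adj, Function.Embedding.coe_subtype,
        Subtype.ext_iff]
    rw [this]
  · rw [Finset.mul_sum]
    refine Finset.sum_congr rfl fun j _ => ?_
    have hne : i ≠ ↑j := fun h => j.2 (h ▸ hi)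
    have : (G.adjMatrix ℝ + t • 1) i ↑j = c := by
      rw [Matrix.add_apply, Matrix.smul_apply, Matrix.one_apply_ne hne,
        hcross i hi ↑j j.2, smul_zero, add_zero]
    rw [this]




lemma good_main (t : ℝ) (ht0 : 0 < t) (ht1 : t < 1) :
    ∀ (n : ℕ) (V : Type) [Fintype V] [DecidableEq V] (G : SimpleGraph V)
      [DecidableRel G.Adj],
    Fintype.card V = n → IsEmpty (pathGraph 4 ↪g G) →
    (∀ x : V → ℝ, (G.adjMatrix ℝ + t • 1) *ᵥ x = 0 → x = 0) ∧
    (Nonempty V → ∃ y : V → ℝ, ((G.adjMatrix ℝ + t • 1) *ᵥ y = fun _ => 1) ∧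
      1 < ∑ i, y i) := by
  intro n
  induction n using Nat.strong_induction_on with
  | _ n ih =>
  intro V _ _ G _ hcard hfree
  rcases Nat.lt_or_ge n 2 with hn | hn
  · rcases Nat.lt_or_ge n 1 with hn0 | hn1
    · -- n = 0
      have hV : IsEmpty V := by
        rw [← Fintype.card_eq_zero_iff]; omega
      refine ⟨fun x _ => funext fun i => hV.elim i, fun h => absurd h (not_nonempty_iff.mpr hV)⟩
    · -- n = 1
      have h1 : Fintype.card V = 1 := by omega
      have hsub : Subsingleton V := Fintype.card_le_one_iff_subsingleton.mp (le_of_eq h1)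
      have key : ∀ (x : V → ℝ) (i : V), ((G.adjMatrix ℝ + t • 1) *ᵥ x) i = t * x i := by
        intro x i
        have expand : ((G.adjMatrix ℝ + t • 1) *ᵥ x) i
            = ∑ j, (G.adjMatrix ℝ + t • 1) i j * x j := by
          simp [Matrix.mulVec, dotProduct]
        rw [expand, Fintype.sum_eq_single i (fun j hj => absurd (Subsingleton.elim j i) hj)]
        simp [Matrix.add_apply, SimpleGraph.adjMatrix_apply, Matrix.smul_apply,
          Matrix.one_apply_eq]
      constructor
      · intro x hx
        funext i
        have := congrFun hx i
        rw [key x i] at this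
        have := mul_eq_zero.mp this
        rcases this with h | h
        · exact absurd h ht0.ne'
        · exact h
      · intro _
        refine ⟨fun _ => 1 / t, funext fun i => ?_, ?_⟩
        · rw [key]
          field_simp
        · rw [Finset.sum_const, Finset.card_univ, h1, one_smul]
          rw [lt_div_iff₀ ht0]; linarith
  · -- n ≥ 2
    have h2 : 2 ≤ Fintype.card V := by omega
    obtain ⟨S, hS1, hS2, hdich⟩ := seinsche G hfree h2
    letI : DecidablePred (· ∈ S) := Classical.decPred _
    letI : DecidableRel (G.induce S).Adj := Classical.decRel _
    letI : DecidableRel (G.induce Sᶜ).Adj := Classical.decRel _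
    obtain ⟨aS, haS⟩ := hS1
    obtain ⟨bS, hbS⟩ := hS2
    have hcard1 : Fintype.card S < n :=
      hcard ▸ Fintype.card_subtype_lt (x := bS) (by simpa using hbS)
    have hcard2 : Fintype.card ↥(Sᶜ) < n :=
      hcard ▸ Fintype.card_subtype_lt (x := aS) (by simp [haS])
    have hfree1 : IsEmpty (pathGraph 4 ↪g G.induce S) :=
      ⟨fun f => hfree.false ((SimpleGraph.Embedding.induce S).comp f)⟩
    have hfree2 : IsEmpty (pathGraph 4 ↪g G.induce Sᶜ) :=
      ⟨fun f => hfree.false ((SimpleGraph.Embedding.induce Sᶜ).comp f)⟩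
    obtain ⟨K1, E1⟩ := ih (Fintype.card S) hcard1 ↥S (G.induce S) rfl hfree1
    obtain ⟨K2, E2⟩ := ih (Fintype.card ↥(Sᶜ)) hcard2 ↥(Sᶜ) (G.induce Sᶜ) rfl hfree2
    obtain ⟨y1, hy1, hs1⟩ := E1 ⟨⟨aS, haS⟩⟩
    obtain ⟨y2, hy2, hs2⟩ := E2 ⟨⟨bS, hbS⟩⟩
    have sumcc : ∀ x : V → ℝ, ∑ j : ↥(Sᶜᶜ), x ↑j = ∑ j : ↥S, x ↑j := by
      intro x
      exact Fintype.sum_equiv (Equiv.subtypeEquivRight (fun z => by simp)) _ _ (fun j => rfl)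
    rcases hdich with hnone | hall
    · -- union case : c = 0
      have hcross : ∀ a ∈ S, ∀ b ∈ Sᶜ, G.adjMatrix ℝ a b = 0 := by
        intro a ha b hb
        simp [SimpleGraph.adjMatrix_apply, hnone a ha b hb]
      have hcross' : ∀ a ∈ Sᶜ, ∀ b ∈ S, G.adjMatrix ℝ a b = 0 := by
        intro a ha b hb
        have : ¬G.Adj a b := fun h => hnone b hb a ha h.symm
        simp [SimpleGraph.adjMatrix_apply, this]
      have splitS : ∀ (x : V → ℝ) (i : V) (hi : i ∈ S),
          ((G.adjMatrix ℝ + t • 1) *ᵥ x) i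
            = (((G.induce S).adjMatrix ℝ + t • 1) *ᵥ fun j : S => x ↑j) ⟨i, hi⟩ := by
        intro x i hi
        rw [mulVec_split G t 0 S Sᶜ rfl hcross x i hi, zero_mul, add_zero]
      have splitC : ∀ (x : V → ℝ) (i : V) (hi : i ∈ Sᶜ),
          ((G.adjMatrix ℝ + t • 1) *ᵥ x) i
            = (((G.induce Sᶜ).adjMatrix ℝ + t • 1) *ᵥ fun j : ↥(Sᶜ) => x ↑j) ⟨i, hi⟩ := by
        intro x i hi
        rw [mulVec_split G t 0 Sᶜ S (compl_compl S).symm hcross' x i hi, zero_mul, add_zero]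
      constructor
      · intro x hx
        have hx1 : ((G.induce S).adjMatrix ℝ + t • 1) *ᵥ (fun j : S => x ↑j) = 0 := by
          funext j
          have := congrFun hx ↑j
          rw [splitS x ↑j j.2] at this
          simpa using this
        have hx2 : ((G.induce Sᶜ).adjMatrix ℝ + t • 1) *ᵥ (fun j : ↥(Sᶜ) => x ↑j) = 0 := by
          funext j
          have := congrFun hx ↑j
          rw [splitC x ↑j j.2] at this
          simpa using this
        have h01 := K1 _ hx1
        have h02 := K2 _ hx2
        funext i
        by_cases hi : i ∈ S
        · exact congrFun h01 ⟨i, hi⟩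
        · exact congrFun h02 ⟨i, hi⟩
      · intro _
        set y : V → ℝ := fun i => if h : i ∈ S then y1 ⟨i, h⟩ else y2 ⟨i, h⟩ with hy
        have r1 : (fun j : S => y ↑j) = y1 := by
          funext j
          simp only [hy, dif_pos j.2]
        have r2 : (fun j : ↥(Sᶜ) => y ↑j) = y2 := by
          funext j
          have : ¬(↑j ∈ S) := j.2
          simp only [hy, dif_neg this]
        refine ⟨y, funext fun i => ?_, ?_⟩
        · by_cases hi : i ∈ S
          · rw [splitS y i hi, r1]
            exact congrFun hy1 ⟨i, hi⟩
          · rw [splitC y i hi, r2]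
            exact congrFun hy2 ⟨i, hi⟩
        · rw [sum_split S y, show (∑ j : S, y ↑j) = ∑ j : S, y1 j from by rw [← r1],
            show (∑ j : ↥(Sᶜ), y ↑j) = ∑ j : ↥(Sᶜ), y2 j from by rw [← r2]]
          linarith
    · -- join case : c = 1
      have hcross : ∀ a ∈ S, ∀ b ∈ Sᶜ, G.adjMatrix ℝ a b = 1 := by
        intro a ha b hb
        simp [SimpleGraph.adjMatrix_apply, hall a ha b hb]
      have hcross' : ∀ a ∈ Sᶜ, ∀ b ∈ S, G.adjMatrix ℝ a b = 1 := by
        intro a ha b hb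
        have : G.Adj a b := (hall b hb a ha).symm
        simp [SimpleGraph.adjMatrix_apply, this]
      have splitS : ∀ (x : V → ℝ) (i : V) (hi : i ∈ S),
          ((G.adjMatrix ℝ + t • 1) *ᵥ x) i
            = (((G.induce S).adjMatrix ℝ + t • 1) *ᵥ fun j : S => x ↑j) ⟨i, hi⟩
              + ∑ j : ↥(Sᶜ), x ↑j := by
        intro x i hi
        rw [mulVec_split G t 1 S Sᶜ rfl hcross x i hi, one_mul]
      have splitC : ∀ (x : V → ℝ) (i : V) (hi : i ∈ Sᶜ),
          ((G.adjMatrix ℝ + t • 1) *ᵥ x) i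
            = (((G.induce Sᶜ).adjMatrix ℝ + t • 1) *ᵥ fun j : ↥(Sᶜ) => x ↑j) ⟨i, hi⟩
              + ∑ j : ↥S, x ↑j := by
        intro x i hi
        rw [mulVec_split G t 1 Sᶜ S (compl_compl S).symm hcross' x i hi, sumcc x, one_mul]
      set s1 : ℝ := ∑ j : S, y1 j with hs1def
      set s2 : ℝ := ∑ j : ↥(Sᶜ), y2 j with hs2def
      have hd : 0 < s1 * s2 - 1 := by nlinarith
      constructor
      · intro x hx
        set a : ℝ := ∑ j : S, x ↑j with ha
        set b : ℝ := ∑ j : ↥(Sᶜ), x ↑j with hb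
        have hx1 : ((G.induce S).adjMatrix ℝ + t • 1) *ᵥ
            ((fun j : S => x ↑j) + b • y1) = 0 := by
          rw [Matrix.mulVec_add, Matrix.mulVec_smul, hy1]
          funext j
          have := congrFun hx ↑j
          rw [splitS x ↑j j.2] at this
          simp only [Subtype.coe_eta, Pi.zero_apply] at this
          simp only [Pi.add_apply, Pi.smul_apply, Pi.zero_apply, smul_eq_mul, mul_one]
          linarith [this]
        have hx2 : ((G.induce Sᶜ).adjMatrix ℝ + t • 1) *ᵥ
            ((fun j : ↥(Sᶜ) => x ↑j) + a • y2) = 0 := by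
          rw [Matrix.mulVec_add, Matrix.mulVec_smul, hy2]
          funext j
          have := congrFun hx ↑j
          rw [splitC x ↑j j.2] at this
          simp only [Subtype.coe_eta, Pi.zero_apply] at this
          simp only [Pi.add_apply, Pi.smul_apply, Pi.zero_apply, smul_eq_mul, mul_one]
          linarith [this]
        have e1 := K1 _ hx1
        have e2 := K2 _ hx2
        -- x restricted to S equals -b • y1
        have f1 : ∀ j : S, x ↑j = -(b * y1 j) := by
          intro j
          have := congrFun e1 j
          simp only [Pi.add_apply, Pi.smul_apply, Pi.zero_apply, smul_eq_mul] at this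
          linarith
        have f2 : ∀ j : ↥(Sᶜ), x ↑j = -(a * y2 j) := by
          intro j
          have := congrFun e2 j
          simp only [Pi.add_apply, Pi.smul_apply, Pi.zero_apply, smul_eq_mul] at this
          linarith
        have ga : a = -(b * s1) := by
          have h5 : ∑ j : S, x ↑j = ∑ j : S, -(b * y1 j) :=
            Finset.sum_congr rfl fun j _ => f1 j
          rw [ha, h5, Finset.sum_neg_distrib, ← Finset.mul_sum, ← hs1def]
        have gb : b = -(a * s2) := by
          have h5 : ∑ j : ↥(Sᶜ), x ↑j = ∑ j : ↥(Sᶜ), -(a * y2 j) :=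
            Finset.sum_congr rfl fun j _ => f2 j
          rw [hb, h5, Finset.sum_neg_distrib, ← Finset.mul_sum, ← hs2def]
        have ha0 : a = 0 := by nlinarith
        have hb0 : b = 0 := by rw [gb, ha0]; ring
        funext i
        by_cases hi : i ∈ S
        · rw [show x i = x ↑(⟨i, hi⟩ : S) from rfl, f1 ⟨i, hi⟩, hb0]; simp
        · rw [show x i = x ↑(⟨i, hi⟩ : ↥(Sᶜ)) from rfl, f2 ⟨i, hi⟩, ha0]; simp
      · intro _
        set d : ℝ := s1 * s2 - 1 with hddef
        set a : ℝ := (s1 * s2 - s1) / d with hadef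
        set b : ℝ := (s1 * s2 - s2) / d with hbdef
        have hb1 : 1 - b = (s2 - 1) / d := by
          have hd' : s1 * s2 - 1 ≠ 0 := hd.ne'
          rw [hbdef, hddef, eq_div_iff hd', sub_mul, div_mul_cancel₀ _ hd']; ring
        have ha1 : 1 - a = (s1 - 1) / d := by
          have hd' : s1 * s2 - 1 ≠ 0 := hd.ne'
          rw [hadef, hddef, eq_div_iff hd', sub_mul, div_mul_cancel₀ _ hd']; ring
        have key1 : (1 - a) * s2 = b := by
          rw [ha1, hbdef]
          field_simp
        have key2 : (1 - b) * s1 = a := by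
          rw [hb1, hadef]
          field_simp
        set y : V → ℝ :=
          fun i => if h : i ∈ S then (1 - b) * y1 ⟨i, h⟩ else (1 - a) * y2 ⟨i, h⟩ with hy
        have r1 : (fun j : S => y ↑j) = (1 - b) • y1 := by
          funext j
          simp only [hy, dif_pos j.2, Pi.smul_apply, smul_eq_mul]
        have r2 : (fun j : ↥(Sᶜ) => y ↑j) = (1 - a) • y2 := by
          funext j
          have : ¬(↑j ∈ S) := j.2
          simp only [hy, dif_neg this, Pi.smul_apply, smul_eq_mul]
        have sum1 : ∑ j : S, y ↑j = (1 - b) * s1 := by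
          rw [show (∑ j : S, y ↑j) = ∑ j : S, ((1-b) • y1) j from by rw [← r1], hs1def,
            Finset.mul_sum]
          exact Finset.sum_congr rfl fun j _ => by simp [mul_comm]
        have sum2 : ∑ j : ↥(Sᶜ), y ↑j = (1 - a) * s2 := by
          rw [show (∑ j : ↥(Sᶜ), y ↑j) = ∑ j : ↥(Sᶜ), ((1-a) • y2) j from by rw [← r2],
            hs2def, Finset.mul_sum]
          exact Finset.sum_congr rfl fun j _ => by simp [mul_comm]
        refine ⟨y, funext fun i => ?_, ?_⟩
        · by_cases hi : i ∈ S
          · rw [splitS y i hi, r1, Matrix.mulVec_smul, hy1, sum2]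
            simp only [Pi.smul_apply, smul_eq_mul, mul_one]
            rw [key1]
            ring
          · rw [splitC y i hi, r2, Matrix.mulVec_smul, hy2, sum1]
            simp only [Pi.smul_apply, smul_eq_mul, mul_one]
            rw [key2]
            ring
        · rw [sum_split S y, sum1, sum2, key2, key1]
          rw [hadef, hbdef, hddef]
          rw [← add_div, lt_div_iff₀ (by linarith : (0:ℝ) < s1 * s2 - 1)]
          nlinarith

lemma evalCharpoly {n : Type} [Fintype n] [DecidableEq n] (M : Matrix n n ℝ) (x : ℝ) :
    (M.charpoly).eval x = (x • (1 : Matrix n n ℝ) - M).det := by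
  rw [Matrix.charpoly, ← Polynomial.coe_evalRingHom, RingHom.map_det]
  congr 1
  ext i j
  by_cases h : i = j
  · subst h; simp [charmatrix_apply_eq, Matrix.smul_apply, Matrix.one_apply]
  · simp [charmatrix_apply_ne _ _ _ h, Matrix.smul_apply, Matrix.one_apply, h]

end Aux

/-- **No cograph has an eigenvalue strictly between `-1` and `0`.**
If a finite simple graph `G` contains no induced path on four vertices (no graph embedding
of the path graph `P₄` into `G`), then every real eigenvalue `lam` of its adjacency matrix
satisfies `lam ≤ -1` or `0 ≤ lam`. -/
theorem cograph_no_eigenvalue_in_open_interval {V : Type} [Fintype V] (G : SimpleGraph V)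
    (hcograph : IsEmpty (SimpleGraph.pathGraph 4 ↪g G)) :
    ∀ lam : ℝ, (graphCharpoly G).IsRoot lam → lam ≤ -1 ∨ 0 ≤ lam := by
  intro lam hroot
  by_contra hcon
  push_neg at hcon
  obtain ⟨h1, h2⟩ := hcon
  letI := Classical.decEq V
  letI : DecidableRel G.Adj := Classical.decRel _
  have hroot' : ((SimpleGraph.adjMatrix ℝ G).charpoly).eval lam = 0 := hroot
  rw [evalCharpoly] at hroot'
  obtain ⟨v, hv0, hv⟩ := (Matrix.exists_mulVec_eq_zero_iff).mpr hroot'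
  have hker : Matrix.mulVec (SimpleGraph.adjMatrix ℝ G + (-lam) • 1) v = 0 := by
    have hA : SimpleGraph.adjMatrix ℝ G + (-lam) • (1 : Matrix V V ℝ)
        = -(lam • 1 - SimpleGraph.adjMatrix ℝ G) := by
      rw [neg_sub, sub_eq_add_neg, ← neg_smul]
    rw [hA, Matrix.neg_mulVec, hv, neg_zero]
  exact hv0 ((good_main (-lam) (by linarith) (by linarith) (Fintype.card V) V G rfl
    hcograph).1 v hker)
end

section
/- Let r ≥ 2 be an odd integer and let G be the cograph with regular balanced cotree T_G(a_1,…,a_{r−1},0 | 0,…,0,b_r), on n = a_1 a_2 ⋯ a_{r−1} b_r vertices. Then for every real number λ with λ ≠ −1 and λ ≠ b_r − 1, the multiplicity of λ as an eigenvalue of G satisfies m(λ) ≤ a_1 a_2 ⋯ a_{r−2}. -/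
open Polynomial

/-- The vertex type of the cograph with regular balanced cotree: iterated copies. -/
def copiesVertex : List ℕ → ℕ → Type
  | [], b => Fin b
  | a :: rest, b => Fin a × copiesVertex rest b

instance copiesVertexFintype : ∀ (l : List ℕ) (b : ℕ), Fintype (copiesVertex l b)
  | [], b => inferInstanceAs (Fintype (Fin b))
  | a :: rest, b =>
      haveI := copiesVertexFintype rest b
      inferInstanceAs (Fintype (Fin a × copiesVertex rest b))

/-- `m` pairwise disjoint copies of `H`, with all edges between distinct copies added when
`j = true` (join), and no edges between copies when `j = false` (disjoint union). -/
def levelGraph {V : Type} (m : ℕ) (H : SimpleGraph V) (j : Bool) : SimpleGraph (Fin m × V) where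
  Adj x y := (x.1 = y.1 ∧ H.Adj x.2 y.2) ∨ (x.1 ≠ y.1 ∧ j = true)
  symm := by
    constructor
    rintro ⟨i, x⟩ ⟨k, y⟩ (⟨h1, h2⟩ | ⟨h1, h2⟩)
    · exact Or.inl ⟨h1.symm, H.adj_symm h2⟩
    · exact Or.inr ⟨fun h => h1 h.symm, h2⟩
  loopless := by
    constructor
    rintro ⟨i, x⟩ (⟨_, h⟩ | ⟨h, _⟩)
    · exact H.irrefl h
    · exact h rfl

/-- The complete graph on `b` vertices if `j = true`, the edgeless graph otherwise. -/
def baseGraph (b : ℕ) (j : Bool) : SimpleGraph (Fin b) := if j then ⊤ else ⊥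

/-- The cograph `H_0` with regular balanced cotree `T_G(a_1, …, a_{r-1}, 0 | 0, …, 0, b)`,
where `l = [a_1, …, a_{r-1}]`; the top level is a join when `j = true`.  (So the graph `G`
of the paper is `cotreeGraph [a_1, …, a_{r-1}] b_r true`: the levels alternate join/union
starting with a join at depth 0, and the deepest level is a clique `K_{b_r}` exactly when
`r` is odd.) -/
def cotreeGraph : ∀ (l : List ℕ) (b : ℕ) (j : Bool), SimpleGraph (copiesVertex l b)
  | [], b, j => baseGraph b j
  | a :: rest, b, j => levelGraph a (cotreeGraph rest b (!j)) j

open Matrix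

lemma kron_det_aux {R : Type*} [CommRing R] {ι κ : Type} [Fintype ι] [Fintype κ]
    [DecidableEq ι] [DecidableEq κ] (B : Matrix ι ι R) (y : R) :
    (y • (1 : Matrix (ι × κ) (ι × κ) R) - Matrix.of (fun (p q : ι × κ) => B p.1 q.1)).det
        * y ^ (Fintype.card ι)
      = y ^ (Fintype.card ι * Fintype.card κ) *
        (y • (1 : Matrix ι ι R) - (Fintype.card κ : R) • B).det := by
  set P : Matrix (ι × κ) ι R := Matrix.of (fun (p : ι × κ) (i : ι) => B p.1 i) with hP
  set Q : Matrix ι (ι × κ) R :=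
    Matrix.of (fun (i : ι) (q : ι × κ) => if i = q.1 then (1 : R) else 0) with hQ
  have hPQ : P * Q = Matrix.of (fun (p q : ι × κ) => B p.1 q.1) := by
    ext p q
    simp [hP, hQ, Matrix.mul_apply, mul_ite]
  have hQP : Q * P = (Fintype.card κ : R) • B := by
    ext i i'
    simp only [hP, hQ, Matrix.mul_apply, Matrix.of_apply, Matrix.smul_apply, smul_eq_mul]
    rw [Fintype.sum_prod_type]
    simp [Finset.sum_ite_eq, Finset.mul_sum, mul_comm]
  set M : Matrix ((ι × κ) ⊕ ι) ((ι × κ) ⊕ ι) R :=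
    Matrix.fromBlocks (y • 1) P Q 1 with hM
  set N : Matrix ((ι × κ) ⊕ ι) ((ι × κ) ⊕ ι) R :=
    Matrix.fromBlocks 1 0 (-Q) (y • 1) with hN
  have hMN : M * N = Matrix.fromBlocks (y • 1 - P * Q) (y • P) 0 (y • 1) := by
    rw [hM, hN, Matrix.fromBlocks_multiply]
    ext (i|i) (j|j) <;>
      simp [Matrix.mul_smul, Matrix.smul_mul, sub_eq_add_neg, Matrix.mul_neg]
  have hNM : N * M = Matrix.fromBlocks (y • 1) P 0 (y • 1 - Q * P) := by
    rw [hM, hN, Matrix.fromBlocks_multiply]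
    ext (i|i) (j|j) <;>
      simp [Matrix.mul_smul, Matrix.smul_mul, sub_eq_add_neg, Matrix.neg_mul, add_comm]
  have key : (M * N).det = (N * M).det := by
    rw [Matrix.det_mul, Matrix.det_mul, mul_comm]
  rw [hMN, hNM, Matrix.det_fromBlocks_zero₂₁, Matrix.det_fromBlocks_zero₂₁] at key
  simpa [Matrix.det_smul, Fintype.card_prod, hPQ, hQP] using key

-- new material
lemma card_copiesVertex : ∀ (l : List ℕ) (b : ℕ), Fintype.card (copiesVertex l b) = l.prod * b
  | [], b => by simp [copiesVertex, copiesVertexFintype]; exact Fintype.card_fin b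
  | a :: rest, b => by
      show Fintype.card (Fin a × copiesVertex rest b) = _
      rw [Fintype.card_prod, Fintype.card_fin, card_copiesVertex rest b, List.prod_cons]
      ring

def flattenEquiv : ∀ (l : List ℕ) (al b : ℕ),
    copiesVertex (l ++ [al]) b ≃ (copiesVertex l 1 × Fin al) × Fin b
  | [], al, b =>
    { toFun := fun p => (((0 : Fin 1), p.1), p.2)
      invFun := fun q => (q.1.2, q.2)
      left_inv := fun p => rfl
      right_inv := fun q => by
        obtain ⟨⟨o, i⟩, x⟩ := q
        simp [Subsingleton.elim (0 : Fin 1) o] }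
  | a :: l, al, b =>
    ((Equiv.refl (Fin a)).prodCongr (flattenEquiv l al b)).trans
      (((Equiv.prodAssoc _ _ _).symm).trans
        (((Equiv.prodAssoc (Fin a) (copiesVertex l 1) (Fin al)).symm).prodCongr
          (Equiv.refl (Fin b))))

lemma flattenEquiv_cons (a : ℕ) (l : List ℕ) (al b : ℕ) (c : Fin a)
    (u : copiesVertex (l ++ [al]) b) :
    flattenEquiv (a :: l) al b (c, u) =
      (((c, ((flattenEquiv l al b u).1.1 : copiesVertex l 1)),
        (flattenEquiv l al b u).1.2), (flattenEquiv l al b u).2) := rfl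

def econn : ∀ (l : List ℕ), Bool → copiesVertex l 1 → copiesVertex l 1 → Bool
  | [], _, _, _ => false
  | _ :: l, j, (c, w), (c', w') => if c = c' then econn l (!j) w w' else j

def jend : List ℕ → Bool → Bool
  | [], j => j
  | _ :: l, j => jend l (!j)

lemma levelGraph_adj {V : Type} (m : ℕ) (H : SimpleGraph V) (j : Bool) (x y : Fin m × V) :
    (levelGraph m H j).Adj x y ↔ (x.1 = y.1 ∧ H.Adj x.2 y.2) ∨ (x.1 ≠ y.1 ∧ j = true) :=
  Iff.rfl

lemma jend_eq : ∀ (l : List ℕ) (j : Bool), jend l j = if Even l.length then j else !j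
  | [], j => by simp [jend]
  | a :: l, j => by
      rw [show jend (a :: l) j = jend l (!j) from rfl, jend_eq l (!j)]
      by_cases h : Even l.length <;>
        simp [h, List.length_cons, Nat.even_add_one]


lemma copies_mk_injEq {a : ℕ} {l : List ℕ} {b : ℕ} (c c' : Fin a) (w w' : copiesVertex l b) :
    (show copiesVertex (a :: l) b from (c, w)) = (show copiesVertex (a :: l) b from (c', w'))
      ↔ c = c' ∧ w = w' :=
  iff_of_eq (Prod.mk.injEq c w c' w')

lemma cotree_adj : ∀ (l : List ℕ) (al b : ℕ) (j : Bool), jend l j = false →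
    ∀ u v : copiesVertex (l ++ [al]) b,
      (cotreeGraph (l ++ [al]) b j).Adj u v ↔
        (((flattenEquiv l al b u).1 = (flattenEquiv l al b v).1 ∧
           (flattenEquiv l al b u).2 ≠ (flattenEquiv l al b v).2) ∨
         ((flattenEquiv l al b u).1.1 ≠ (flattenEquiv l al b v).1.1 ∧
           econn l j (flattenEquiv l al b u).1.1 (flattenEquiv l al b v).1.1 = true))
  | [], al, b, j, hj, u, v => by
      have hjf : j = false := hj
      subst hjf
      obtain ⟨i, x⟩ := (u : Fin al × Fin b)
      obtain ⟨k, y⟩ := (v : Fin al × Fin b)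
      show (levelGraph al (baseGraph b true) false).Adj (i, x) (k, y) ↔ _
      rw [levelGraph_adj]
      simp only [baseGraph, if_pos rfl, SimpleGraph.top_adj, flattenEquiv, Equiv.coe_fn_mk,
        econn, ne_eq, Prod.ext_iff]
      tauto
  | a :: l, al, b, j, hj, u, v => by
      obtain ⟨c, u'⟩ := (u : Fin a × copiesVertex (l ++ [al]) b)
      obtain ⟨c', v'⟩ := (v : Fin a × copiesVertex (l ++ [al]) b)
      have IH := cotree_adj l al b (!j) hj u' v'
      show (levelGraph a (cotreeGraph (l ++ [al]) b (!j)) j).Adj (c, u') (c', v') ↔ _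
      rw [levelGraph_adj, flattenEquiv_cons, flattenEquiv_cons]
      show (c = c' ∧ _) ∨ (c ≠ c' ∧ _) ↔ _
      by_cases hc : c = c'
      · subst hc
        rw [IH]
        show _ ↔ _ ∨ (¬ _ ∧ (if c = c then econn l (!j) _ _ else j) = true)
        rw [if_pos rfl]
        simp only [copies_mk_injEq, Prod.mk.injEq, Prod.ext_iff, ne_eq, eq_self_iff_true, true_and, not_true_eq_false,
          false_and, or_false]
        all_goals exact or_congr (and_congr_left fun _ => ⟨fun ⟨h1, h2⟩ => by rw [h1, h2],
          fun h => ⟨congrArg (fun p : (Fin a × copiesVertex l 1) × Fin al => p.1.2) h,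
            congrArg (fun p : (Fin a × copiesVertex l 1) × Fin al => p.2) h⟩⟩) Iff.rfl
      · show _ ↔ _ ∨ (¬ _ ∧ (if c = c' then econn l (!j) _ _ else j) = true)
        rw [if_neg hc]
        simp only [copies_mk_injEq, Prod.mk.injEq, Prod.ext_iff, ne_eq, hc, false_and, or_false, not_false_eq_true, true_and]
        all_goals exact or_congr ⟨False.elim, fun ⟨h, _⟩ =>
          hc (congrArg (fun p : (Fin a × copiesVertex l 1) × Fin al => p.1.1) h)⟩ Iff.rfl

lemma mult_bound_gen (l : List ℕ) (al b : ℕ) (j : Bool) (hj : jend l j = false)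
    [instE : DecidableEq (copiesVertex (l ++ [al]) b)]
    [inst : DecidableRel (cotreeGraph (l ++ [al]) b j).Adj]
    (lam : ℝ) (h1 : lam ≠ -1) (h2 : lam ≠ (b : ℝ) - 1) :
    ((SimpleGraph.adjMatrix ℝ (cotreeGraph (l ++ [al]) b j)).charpoly).rootMultiplicity lam
      ≤ l.prod := by
  classical
  set W := copiesVertex l 1 with hW
  set A := SimpleGraph.adjMatrix ℝ (cotreeGraph (l ++ [al]) b j) with hA
  set e := flattenEquiv l al b with he
  have hre : (Matrix.reindex e e A).charpoly = A.charpoly := Matrix.charpoly_reindex e A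
  -- the base connection matrix
  set Emat : Matrix W W ℝ :=
    Matrix.of (fun w w' => if w = w' then 0 else if econn l j w w' then (1 : ℝ) else 0)
    with hEmat
  set MmatC : Matrix (W × Fin al) (W × Fin al) ℝ[X] :=
    Matrix.of (fun pi pi' => (if pi = pi' then 1 else 0) + C (Emat pi.1 pi'.1)) with hM
  have hid1 : Matrix.charmatrix (Matrix.reindex e e A) =
      ((X : ℝ[X]) + 1) • (1 : Matrix ((W × Fin al) × Fin b) ((W × Fin al) × Fin b) ℝ[X])
        - Matrix.of (fun p q => MmatC p.1 q.1) := by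
    ext p q : 2
    have hadj : (cotreeGraph (l ++ [al]) b j).Adj (e.symm p) (e.symm q) ↔
        ((p.1 = q.1 ∧ p.2 ≠ q.2) ∨ (p.1.1 ≠ q.1.1 ∧ econn l j p.1.1 q.1.1 = true)) := by
      have h := cotree_adj l al b j hj (e.symm p) (e.symm q)
      rw [← he] at h
      simpa [Equiv.apply_symm_apply] using h
    have hAe : (Matrix.reindex e e A) p q
        = if (cotreeGraph (l ++ [al]) b j).Adj (e.symm p) (e.symm q) then (1:ℝ) else 0 := by
      simp [hA, Matrix.reindex_apply, Matrix.submatrix_apply]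
    rw [Matrix.charmatrix_apply, hAe]
    by_cases hpq : p = q
    · subst hpq
      simp [SimpleGraph.irrefl, Matrix.one_apply, hM, hEmat]
      try ring
    · by_cases h11 : p.1 = q.1
      · have hne2 : p.2 ≠ q.2 := fun h => hpq (Prod.ext h11 h)
        have hadj' : (cotreeGraph (l ++ [al]) b j).Adj (e.symm p) (e.symm q) :=
          hadj.mpr (Or.inl ⟨h11, hne2⟩)
        have hww : p.1.1 = q.1.1 := by rw [h11]
        simp [hpq, h11, hww, hadj', Matrix.diagonal_apply, Matrix.one_apply, hM, hEmat]
      · by_cases hww : p.1.1 = q.1.1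
        · have hnadj : ¬ (cotreeGraph (l ++ [al]) b j).Adj (e.symm p) (e.symm q) := by
            rw [hadj]
            rintro (⟨h, _⟩ | ⟨h, _⟩)
            · exact h11 h
            · exact h hww
          simp [hpq, h11, hww, hnadj, Matrix.diagonal_apply, Matrix.one_apply, hM, hEmat]
        · by_cases hec : econn l j p.1.1 q.1.1 = true
          · have hadj' : (cotreeGraph (l ++ [al]) b j).Adj (e.symm p) (e.symm q) :=
              hadj.mpr (Or.inr ⟨hww, hec⟩)
            simp [hpq, h11, hww, hec, hadj', Matrix.diagonal_apply, Matrix.one_apply, hM, hEmat]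
          · have hnadj : ¬ (cotreeGraph (l ++ [al]) b j).Adj (e.symm p) (e.symm q) := by
              rw [hadj]
              rintro (⟨h, _⟩ | ⟨_, h⟩)
              · exact h11 h
              · exact hec h
            simp [hpq, h11, hww, hec, hnadj, Matrix.diagonal_apply, Matrix.one_apply, hM, hEmat]
  have E1 : A.charpoly * ((X : ℝ[X]) + 1) ^ (Fintype.card (W × Fin al))
      = ((X : ℝ[X]) + 1) ^ (Fintype.card (W × Fin al) * b) *
        (((X : ℝ[X]) + 1) • (1 : Matrix (W × Fin al) (W × Fin al) ℝ[X]) - (b : ℝ[X]) • MmatC).det := by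
    rw [← hre, Matrix.charpoly, hid1]
    have := kron_det_aux (κ := Fin b) MmatC ((X : ℝ[X]) + 1)
    simpa [Fintype.card_fin] using this
  set z : ℝ[X] := X + C ((1:ℝ) - b) with hz
  set B2 : Matrix W W ℝ[X] := Matrix.of (fun w w' => C ((b : ℝ) * Emat w w')) with hB2
  have hid2 : ((X : ℝ[X]) + 1) • (1 : Matrix (W × Fin al) (W × Fin al) ℝ[X]) - (b : ℝ[X]) • MmatC
      = z • (1 : Matrix (W × Fin al) (W × Fin al) ℝ[X])
        - Matrix.of (fun p q : W × Fin al => B2 p.1 q.1) := by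
    ext p q : 2
    simp only [Matrix.sub_apply, Matrix.smul_apply, Matrix.one_apply, Matrix.of_apply, hM, hB2,
      hz, smul_eq_mul]
    have hcb : (b : ℝ[X]) = C ((b : ℝ)) := by simp
    rw [Polynomial.C_sub, Polynomial.C_1, Polynomial.C_mul, hcb]
    split_ifs <;> ring
  set Smat : Matrix W W ℝ :=
    Matrix.of (fun w w' => (al : ℝ) * ((b : ℝ) * Emat w w')
      + (if w = w' then (b : ℝ) - 1 else 0)) with hS
  have hid3 : z • (1 : Matrix W W ℝ[X]) - (al : ℝ[X]) • B2 = Matrix.charmatrix Smat := by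
    ext w w' : 2
    rw [Matrix.charmatrix_apply]
    simp only [Matrix.sub_apply, Matrix.smul_apply, Matrix.one_apply, Matrix.of_apply, hB2, hS,
      hz, smul_eq_mul, Matrix.diagonal_apply]
    have hcb : (al : ℝ[X]) = C ((al : ℝ)) := by simp
    rw [Polynomial.C_add, Polynomial.C_mul, Polynomial.C_mul, Polynomial.C_sub, Polynomial.C_1, hcb]
    split_ifs <;> simp <;> ring
  have E2 : ((z • (1 : Matrix (W × Fin al) (W × Fin al) ℝ[X])
        - Matrix.of (fun p q : W × Fin al => B2 p.1 q.1)).det) * z ^ (Fintype.card W)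
      = z ^ (Fintype.card W * al) * (Matrix.charpoly Smat) := by
    have := kron_det_aux (κ := Fin al) B2 z
    rw [show z • (1 : Matrix W W ℝ[X]) - ((Fintype.card (Fin al)) : ℝ[X]) • B2
        = Matrix.charmatrix Smat from by rw [Fintype.card_fin]; exact hid3] at this
    simpa [Fintype.card_fin, Matrix.charpoly] using this
  rw [hid2] at E1
  -- assemble
  set y : ℝ[X] := (X : ℝ[X]) + 1 with hy
  set N1 := Fintype.card (W × Fin al) with hN1
  set NW := Fintype.card W with hNW
  set D := (z • (1 : Matrix (W × Fin al) (W × Fin al) ℝ[X])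
      - Matrix.of (fun p q : W × Fin al => B2 p.1 q.1)).det with hD
  have Efin : A.charpoly * y ^ N1 * z ^ NW
      = y ^ (N1 * b) * (z ^ (NW * al) * Matrix.charpoly Smat) := by
    calc A.charpoly * y ^ N1 * z ^ NW = (y ^ (N1 * b) * D) * z ^ NW := by rw [E1]
    _ = y ^ (N1 * b) * (D * z ^ NW) := by ring
    _ = y ^ (N1 * b) * (z ^ (NW * al) * Matrix.charpoly Smat) := by rw [E2]
  -- monicity and nonvanishing
  have hym : y.Monic := by simpa [hy] using monic_X_add_C (1 : ℝ)
  have hzm : z.Monic := monic_X_add_C _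
  have hpm : A.charpoly.Monic := Matrix.charpoly_monic A
  have hsm : (Matrix.charpoly Smat).Monic := Matrix.charpoly_monic Smat
  have hyroot : ∀ k : ℕ, rootMultiplicity lam (y ^ k) = 0 := by
    intro k
    apply rootMultiplicity_eq_zero
    simp only [IsRoot, eval_pow, hy, eval_add, eval_X, eval_one]
    exact pow_ne_zero _ (fun h => h1 (by linarith))
  have hzroot : ∀ k : ℕ, rootMultiplicity lam (z ^ k) = 0 := by
    intro k
    apply rootMultiplicity_eq_zero
    simp only [IsRoot, eval_pow, hz, eval_add, eval_X, eval_C]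
    refine pow_ne_zero _ (fun h => h2 ?_)
    linarith
  have hL : rootMultiplicity lam (A.charpoly * y ^ N1 * z ^ NW)
      = rootMultiplicity lam A.charpoly := by
    rw [rootMultiplicity_mul (mul_ne_zero (mul_ne_zero hpm.ne_zero (pow_ne_zero _ hym.ne_zero))
        (pow_ne_zero _ hzm.ne_zero)),
      rootMultiplicity_mul (mul_ne_zero hpm.ne_zero (pow_ne_zero _ hym.ne_zero)),
      hyroot, hzroot]
    ring
  have hR : rootMultiplicity lam (y ^ (N1 * b) * (z ^ (NW * al) * Matrix.charpoly Smat))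
      = rootMultiplicity lam (Matrix.charpoly Smat) := by
    rw [rootMultiplicity_mul (mul_ne_zero (pow_ne_zero _ hym.ne_zero)
        (mul_ne_zero (pow_ne_zero _ hzm.ne_zero) hsm.ne_zero)),
      rootMultiplicity_mul (mul_ne_zero (pow_ne_zero _ hzm.ne_zero) hsm.ne_zero),
      hyroot, hzroot]
    ring
  have hmain : rootMultiplicity lam A.charpoly = rootMultiplicity lam (Matrix.charpoly Smat) := by
    have h := congrArg (rootMultiplicity lam) Efin
    rw [hL, hR] at h
    exact h
  have hdeg : rootMultiplicity lam (Matrix.charpoly Smat) ≤ (Matrix.charpoly Smat).natDegree := by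
    have hd := Polynomial.natDegree_le_of_dvd (pow_rootMultiplicity_dvd (Matrix.charpoly Smat) lam)
      hsm.ne_zero
    simpa [natDegree_pow, natDegree_X_sub_C] using hd
  have hcard : (Matrix.charpoly Smat).natDegree = l.prod := by
    rw [Matrix.charpoly_natDegree_eq_dim]
    show Fintype.card (copiesVertex l 1) = l.prod
    rw [card_copiesVertex]
    simp
  rw [hmain]
  rw [hcard] at hdeg
  exact hdeg

lemma jend_true_of_odd (l : List ℕ) (h : Odd l.length) : jend l true = false := by
  rw [jend_eq]
  simp [Nat.not_even_iff_odd.mpr h]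

/-- Let `r ≥ 2` be odd and let `G` be the cograph with regular balanced cotree
`T_G(a_1, …, a_{r-1}, 0 | 0, …, 0, b)`, where `[a_1, …, a_{r-1}] = as ++ [al]` are positive
and `b ≥ 2`.  Then for every real `lam` with `lam ≠ -1` and `lam ≠ b - 1`, the multiplicity
of `lam` as an eigenvalue of `G` satisfies `m(lam) ≤ a_1 a_2 ⋯ a_{r-2}` (an empty product
being `1`). -/
theorem multiplicity_bound_odd_regular_balanced_cotree
    (r : ℕ) (hr : 2 ≤ r) (hodd : Odd r)
    (as : List ℕ) (al : ℕ) (hlen : (as ++ [al]).length = r - 1)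
    (hpos : ∀ a ∈ as ++ [al], 0 < a)
    (b : ℕ) (hb : 2 ≤ b) :
    ∀ lam : ℝ, lam ≠ -1 → lam ≠ (b : ℝ) - 1 →
      eigMult (cotreeGraph (as ++ [al]) b true) lam ≤ as.prod := by
  intro lam h1 h2
  have hlen' : as.length + 1 = r - 1 := by simpa using hlen
  obtain ⟨m, hm⟩ := hodd
  have hodd' : Odd as.length := ⟨m - 1, by omega⟩
  have hj : jend as true = false := jend_true_of_odd as hodd'
  exact mult_bound_gen as al b true hj (instE := Classical.decEq _)
    (inst := Classical.decRel _) lam h1 h2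
end

section
/- Let r ≥ 2 be an odd integer and let G be the cograph with non-regular balanced cotree T_G(a_1,…,a_{r−1},0 | b_1,…,b_r), where b_i = 0 for every even index i with 1 ≤ i ≤ r−1 and b_i ≥ b_r for every odd index i with 1 ≤ i ≤ r−1. Then b_r − 1 is an eigenvalue of G with multiplicity m(b_r − 1) = a_1 a_2 ⋯ a_{r−2} (a_{r−1} − 1). -/
open Polynomial

/-- Vertex type for a non-regular balanced cotree: at each level, `p.1` copies of the
next level plus `p.2` extra leaf vertices. -/
def nrVertex : List (ℕ × ℕ) → ℕ → Type
  | [], b => Fin b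
  | p :: rest, b => (Fin p.1 × nrVertex rest b) ⊕ Fin p.2

instance nrVertexFintype : ∀ (l : List (ℕ × ℕ)) (b : ℕ), Fintype (nrVertex l b)
  | [], b => inferInstanceAs (Fintype (Fin b))
  | p :: rest, b =>
      haveI := nrVertexFintype rest b
      inferInstanceAs (Fintype ((Fin p.1 × nrVertex rest b) ⊕ Fin p.2))

/-- One level of a non-regular balanced cotree: `a` pairwise disjoint copies of `H` together
with `bb` additional single vertices; all edges between distinct parts are added when
`j = true` (join), and none when `j = false` (disjoint union). -/
def nrLevel {V : Type} (a bb : ℕ) (H : SimpleGraph V) (j : Bool) :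
    SimpleGraph ((Fin a × V) ⊕ Fin bb) where
  Adj x y := match x, y with
    | Sum.inl x, Sum.inl y => (x.1 = y.1 ∧ H.Adj x.2 y.2) ∨ (x.1 ≠ y.1 ∧ j = true)
    | Sum.inl _, Sum.inr _ => j = true
    | Sum.inr _, Sum.inl _ => j = true
    | Sum.inr i, Sum.inr k => i ≠ k ∧ j = true
  symm := by
    constructor
    rintro (⟨i, x⟩ | i) (⟨k, y⟩ | k) h
    · rcases h with ⟨h1, h2⟩ | ⟨h1, h2⟩
      · exact Or.inl ⟨h1.symm, H.adj_symm h2⟩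
      · exact Or.inr ⟨fun h => h1 h.symm, h2⟩
    · exact h
    · exact h
    · exact ⟨fun h' => h.1 h'.symm, h.2⟩
  loopless := by
    constructor
    rintro (⟨i, x⟩ | i) h
    · rcases h with ⟨_, h⟩ | ⟨h, _⟩
      · exact H.loopless.irrefl x h
      · exact h rfl
    · exact h.1 rfl

/-- The cograph `H_0` with balanced cotree `T_G(a_1, …, a_{r-1}, 0 | b_1, …, b_{r-1}, b_r)`,
where `l = [(a_1, b_1), …, (a_{r-1}, b_{r-1})]` and `b = b_r`; the top level is a join when
`j = true`, and levels alternate join/union. -/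
def nrCotreeGraph : ∀ (l : List (ℕ × ℕ)) (b : ℕ) (j : Bool), SimpleGraph (nrVertex l b)
  | [], b, j => baseGraph b j
  | p :: rest, b, j => nrLevel p.1 p.2 (nrCotreeGraph rest b (!j)) j

section Bridge
open Matrix

variable {n : Type} [Fintype n] [DecidableEq n]

lemma charmatrix_diagonal' (d : n → ℝ) :
    charmatrix (diagonal d) = diagonal (fun i => (X : ℝ[X]) - C (d i)) := by
  ext i j
  by_cases h : i = j
  · subst h; simp [charmatrix_apply_eq]
  · simp [charmatrix_apply_ne _ _ _ h, diagonal_apply_ne _ h]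

lemma charpoly_diagonal' (d : n → ℝ) :
    (diagonal d).charpoly = ∏ i, (X - C (d i)) := by
  rw [Matrix.charpoly, charmatrix_diagonal', det_diagonal]

lemma charpoly_unitary_conj (U : Matrix n n ℝ) (hU : U ∈ Matrix.unitaryGroup n ℝ)
    (D : Matrix n n ℝ) : (U * D * star U).charpoly = D.charpoly := by
  have hUs : U * star U = 1 := (Matrix.mem_unitaryGroup_iff).mp hU
  let φ : Matrix n n ℝ →+* Matrix n n ℝ[X] := (C : ℝ →+* ℝ[X]).mapMatrix
  have hsU' : star U * U = 1 := (Matrix.mem_unitaryGroup_iff').mp hU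
  have hφ : φ U * φ (star U) = 1 := by
    rw [← _root_.map_mul, hUs, _root_.map_one]
  have hφ' : φ (star U) * φ U = 1 := by
    rw [← _root_.map_mul, hsU', _root_.map_one]
  have key : charmatrix (U * D * star U) = φ U * charmatrix D * φ (star U) := by
    show Matrix.scalar n (X : ℝ[X]) - φ (U * D * star U)
        = φ U * (Matrix.scalar n (X : ℝ[X]) - φ D) * φ (star U)
    rw [_root_.map_mul, _root_.map_mul, mul_sub, sub_mul]
    congr 1
    rw [← Matrix.scalar_commute (X : ℝ[X]) (fun r => Commute.all _ _) (φ U)]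
    rw [mul_assoc, hφ, mul_one]
  rw [Matrix.charpoly, Matrix.charpoly, key, det_mul, det_mul, mul_comm, ← mul_assoc,
    ← det_mul, hφ', det_one, one_mul]

lemma charpoly_isHermitian (A : Matrix n n ℝ) (hA : A.IsHermitian) :
    A.charpoly = ∏ i, (X - C (hA.eigenvalues i)) := by
  conv_lhs => rw [hA.spectral_theorem, Unitary.conjStarAlgAut_apply]
  rw [charpoly_unitary_conj _ (hA.eigenvectorUnitary).2]
  rw [show (RCLike.ofReal ∘ hA.eigenvalues : n → ℝ) = hA.eigenvalues by
    funext i; simp [RCLike.ofReal]]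
  exact charpoly_diagonal' _

lemma rootMultiplicity_charpoly (A : Matrix n n ℝ) (hA : A.IsHermitian) (μ : ℝ) :
    A.charpoly.rootMultiplicity μ = Fintype.card {i // hA.eigenvalues i = μ} := by
  rw [charpoly_isHermitian A hA]
  classical
  rw [← Finset.prod_filter_mul_prod_filter_not Finset.univ (fun i => hA.eigenvalues i = μ)]
  have h1 : (∏ i ∈ Finset.univ.filter (fun i => hA.eigenvalues i = μ), (X - C (hA.eigenvalues i)))
      = (X - C μ) ^ (Finset.univ.filter (fun i => hA.eigenvalues i = μ)).card := by
    rw [Finset.prod_congr rfl (fun i hi => by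
      rw [(Finset.mem_filter.mp hi).2]), Finset.prod_const]
  rw [h1, Polynomial.rootMultiplicity_mul, Polynomial.rootMultiplicity_X_sub_C_pow,
    Polynomial.rootMultiplicity_eq_zero, add_zero, Fintype.card_subtype]
  · intro hroot
    rw [Polynomial.IsRoot, eval_prod] at hroot
    obtain ⟨i, hi, h0⟩ := Finset.prod_eq_zero_iff.mp hroot
    simp only [eval_sub, eval_X, eval_C, sub_eq_zero] at h0
    exact (Finset.mem_filter.mp hi).2 h0.symm
  · apply mul_ne_zero
    · exact pow_ne_zero _ (X_sub_C_ne_zero μ)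
    · exact Finset.prod_ne_zero_iff.mpr (fun i _ => X_sub_C_ne_zero _)

lemma rank_sub_smul_one (A : Matrix n n ℝ) (hA : A.IsHermitian) (μ : ℝ) :
    (A - μ • 1).rank = Fintype.card {i // hA.eigenvalues i ≠ μ} := by
  classical
  set U : Matrix n n ℝ := (hA.eigenvectorUnitary : Matrix n n ℝ) with hUdef
  have hUs : U * star U = 1 := (Matrix.mem_unitaryGroup_iff).mp hA.eigenvectorUnitary.2
  have hsU : star U * U = 1 := (Matrix.mem_unitaryGroup_iff').mp hA.eigenvectorUnitary.2
  have hd : (diagonal (RCLike.ofReal ∘ hA.eigenvalues) : Matrix n n ℝ) - μ • (1 : Matrix n n ℝ)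
      = diagonal (fun i => hA.eigenvalues i - μ) := by
    ext i j
    by_cases h : i = j
    · subst h; simp [RCLike.ofReal]
    · simp [diagonal_apply_ne _ h, Matrix.one_apply_ne h]
  have hdec : A - μ • (1 : Matrix n n ℝ)
      = U * diagonal (fun i => hA.eigenvalues i - μ) * star U := by
    conv_lhs => rw [hA.spectral_theorem, Unitary.conjStarAlgAut_apply]
    rw [← hd, mul_sub, sub_mul]
    congr 1
    rw [Matrix.mul_smul, mul_one, smul_mul, hUs]
  have hdetU : IsUnit U.det := by
    apply isUnit_iff_exists_inv.mpr ⟨(star U).det, ?_⟩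
    rw [← det_mul, hUs, det_one]
  have hdetsU : IsUnit (star U).det := by
    apply isUnit_iff_exists_inv.mpr ⟨U.det, ?_⟩
    rw [← det_mul, hsU, det_one]
  rw [hdec, rank_mul_eq_left_of_isUnit_det _ _ hdetsU,
    rank_mul_eq_right_of_isUnit_det _ _ hdetU, rank_diagonal]
  exact Fintype.card_congr (Equiv.subtypeEquivRight (fun i => by simp [sub_ne_zero]))

lemma finrank_ker_eq (A : Matrix n n ℝ) (hA : A.IsHermitian) (μ : ℝ) :
    Module.finrank ℝ (LinearMap.ker (A - μ • 1).mulVecLin)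
      = Fintype.card {i // hA.eigenvalues i = μ} := by
  classical
  have h1 := LinearMap.finrank_range_add_finrank_ker (A - μ • (1 : Matrix n n ℝ)).mulVecLin
  have h2 : Module.finrank ℝ (LinearMap.range (A - μ • (1 : Matrix n n ℝ)).mulVecLin)
      = (A - μ • (1 : Matrix n n ℝ)).rank := rfl
  rw [h2, rank_sub_smul_one A hA μ, Module.finrank_pi] at h1
  have h3 : Fintype.card {i // hA.eigenvalues i = μ} + Fintype.card {i // hA.eigenvalues i ≠ μ}
      = Fintype.card n := by
    rw [Fintype.card_subtype, Fintype.card_subtype]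
    simpa using Finset.card_filter_add_card_filter_not
      (s := (Finset.univ : Finset n)) (p := fun i => hA.eigenvalues i = μ)
  omega

/-- Algebraic multiplicity equals geometric multiplicity for Hermitian real matrices. -/
lemma rootMultiplicity_eq_finrank_ker (A : Matrix n n ℝ) (hA : A.IsHermitian) (μ : ℝ) :
    A.charpoly.rootMultiplicity μ = Module.finrank ℝ (LinearMap.ker (A - μ • 1).mulVecLin) := by
  rw [rootMultiplicity_charpoly A hA μ, finrank_ker_eq A hA μ]

end Bridge
section Framework

open scoped Classical

/-- Sum of `x` over the neighbors of `v`. -/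
noncomputable def asum {V : Type} [Fintype V] (G : SimpleGraph V) (x : V → ℝ) (v : V) : ℝ :=
  ∑ u, if G.Adj v u then x u else 0

/-- `x` satisfies `lam * x = A x + t 𝟙` pointwise. -/
def Sol {V : Type} [Fintype V] (G : SimpleGraph V) (lam : ℝ) (x : V → ℝ) (t : ℝ) : Prop :=
  ∀ v, lam * x v = asum G x v + t

def tot {V : Type} [Fintype V] (x : V → ℝ) : ℝ := ∑ v, x v

lemma asum_add {V : Type} [Fintype V] (G : SimpleGraph V) (x y : V → ℝ) (v : V) :
    asum G (x + y) v = asum G x v + asum G y v := by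
  rw [asum, asum, asum, ← Finset.sum_add_distrib]
  exact Finset.sum_congr rfl fun u _ => by split <;> simp

lemma asum_smul {V : Type} [Fintype V] (G : SimpleGraph V) (c : ℝ) (x : V → ℝ) (v : V) :
    asum G (c • x) v = c * asum G x v := by
  rw [asum, asum, Finset.mul_sum]
  exact Finset.sum_congr rfl fun u _ => by split <;> simp

lemma tot_add {V : Type} [Fintype V] (x y : V → ℝ) : tot (x + y) = tot x + tot y := by
  rw [tot, tot, tot, ← Finset.sum_add_distrib]; rfl

lemma tot_smul {V : Type} [Fintype V] (c : ℝ) (x : V → ℝ) : tot (c • x) = c * tot x := by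
  rw [tot, tot, Finset.mul_sum]; rfl

/-- The submodule of vectors `x` with `lam * x = A x` and total sum `0`. -/
noncomputable def Zmod {V : Type} [Fintype V] (G : SimpleGraph V) (lam : ℝ) :
    Submodule ℝ (V → ℝ) where
  carrier := {x | Sol G lam x 0 ∧ tot x = 0}
  add_mem' := by
    rintro x y ⟨hx, hx0⟩ ⟨hy, hy0⟩
    refine ⟨fun v => ?_, by rw [tot_add, hx0, hy0, add_zero]⟩
    have h1 := hx v; have h2 := hy v
    rw [asum_add]
    simp only [Pi.add_apply]
    rw [mul_add, h1, h2]; ring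
  zero_mem' := by
    refine ⟨fun v => ?_, by simp [tot]⟩
    simp [asum]
  smul_mem' := by
    rintro c x ⟨hx, hx0⟩
    refine ⟨fun v => ?_, by rw [tot_smul, hx0, mul_zero]⟩
    have h1 := hx v
    rw [asum_smul]
    simp only [Pi.smul_apply, smul_eq_mul]
    linear_combination c * h1

lemma mem_Zmod_iff {V : Type} [Fintype V] (G : SimpleGraph V) (lam : ℝ) (x : V → ℝ) :
    x ∈ Zmod G lam ↔ Sol G lam x 0 ∧ tot x = 0 := Iff.rfl

/-- helper: `∑ (if c = c' then P c' else Q c') = P c + ∑ Q - Q c`. -/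
lemma sum_ite_eq_helper {α : Type} [Fintype α] [DecidableEq α] (c : α) (P Q : α → ℝ) :
    ∑ c', (if c = c' then P c' else Q c') = P c + (∑ c', Q c') - Q c := by
  have h : ∀ c' : α, (if c = c' then P c' else Q c')
      = (if c = c' then P c' - Q c' else 0) + Q c' := by
    intro c'; split <;> ring
  rw [Finset.sum_congr rfl fun c' _ => h c', Finset.sum_add_distrib, Finset.sum_ite_eq]
  simp only [Finset.mem_univ, if_true]
  ring

end Framework

section Levels

open scoped Classical

variable {a bb : ℕ} {V : Type} [Fintype V]

noncomputable def csum (x : ((Fin a × V) ⊕ Fin bb) → ℝ) (c : Fin a) : ℝ := ∑ w, x (Sum.inl (c, w))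

noncomputable def esum (x : ((Fin a × V) ⊕ Fin bb) → ℝ) : ℝ := ∑ i, x (Sum.inr i)

noncomputable def Ssum (x : ((Fin a × V) ⊕ Fin bb) → ℝ) : ℝ := ∑ c, csum x c

lemma tot_split (x : ((Fin a × V) ⊕ Fin bb) → ℝ) : tot x = Ssum x + esum x := by
  rw [tot, Fintype.sum_sum_type, Fintype.sum_prod_type]; rfl

lemma tot_comp_inl (x : ((Fin a × V) ⊕ Fin bb) → ℝ) (c : Fin a) :
    tot (fun w => x (Sum.inl (c, w))) = csum x c := rfl

variable (H : SimpleGraph V)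

lemma nrLevel_adj_inl_inl (j : Bool) (c c' : Fin a) (w w' : V) :
    (nrLevel a bb H j).Adj (Sum.inl (c, w)) (Sum.inl (c', w')) ↔
      ((c = c' ∧ H.Adj w w') ∨ (c ≠ c' ∧ j = true)) := Iff.rfl

lemma nrLevel_adj_inl_inr (j : Bool) (c : Fin a) (w : V) (i : Fin bb) :
    (nrLevel a bb H j).Adj (Sum.inl (c, w)) (Sum.inr i) ↔ (j = true) := Iff.rfl

lemma nrLevel_adj_inr_inl (j : Bool) (c : Fin a) (w : V) (i : Fin bb) :
    (nrLevel a bb H j).Adj (Sum.inr i) (Sum.inl (c, w)) ↔ (j = true) := Iff.rfl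

lemma nrLevel_adj_inr_inr (j : Bool) (i k : Fin bb) :
    (nrLevel a bb H j).Adj (Sum.inr i) (Sum.inr k) ↔ (i ≠ k ∧ j = true) := Iff.rfl

lemma asum_nrLevel_inl_false (x : ((Fin a × V) ⊕ Fin bb) → ℝ) (c : Fin a) (w : V) :
    asum (nrLevel a bb H false) x (Sum.inl (c, w))
      = asum H (fun w' => x (Sum.inl (c, w'))) w := by
  rw [asum, Fintype.sum_sum_type, Fintype.sum_prod_type]
  have h2 : (∑ i : Fin bb, if (nrLevel a bb H false).Adj (Sum.inl (c, w)) (Sum.inr i)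
      then x (Sum.inr i) else 0) = 0 :=
    Finset.sum_eq_zero fun i _ => by simp [nrLevel_adj_inl_inr]
  rw [h2, add_zero]
  trans (∑ c' : Fin a, if c = c' then asum H (fun w' => x (Sum.inl (c, w'))) w else 0)
  · refine Finset.sum_congr rfl fun c' _ => ?_
    by_cases h : c = c'
    · subst h
      rw [if_pos rfl, asum]
      refine Finset.sum_congr rfl fun w' _ => ?_
      by_cases h2 : H.Adj w w' <;> simp [nrLevel_adj_inl_inl, h2]
    · rw [if_neg h]
      exact Finset.sum_eq_zero fun w' _ => by simp [nrLevel_adj_inl_inl, h]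
  · rw [Finset.sum_ite_eq]; simp

lemma asum_nrLevel_inl_true (x : ((Fin a × V) ⊕ Fin bb) → ℝ) (c : Fin a) (w : V) :
    asum (nrLevel a bb H true) x (Sum.inl (c, w))
      = asum H (fun w' => x (Sum.inl (c, w'))) w + (Ssum x - csum x c) + esum x := by
  rw [asum, Fintype.sum_sum_type, Fintype.sum_prod_type]
  have h2 : (∑ i : Fin bb, if (nrLevel a bb H true).Adj (Sum.inl (c, w)) (Sum.inr i)
      then x (Sum.inr i) else 0) = esum x :=
    Finset.sum_congr rfl fun i _ => by simp [nrLevel_adj_inl_inr]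
  rw [h2]
  congr 1
  trans (∑ c' : Fin a, if c = c' then asum H (fun w' => x (Sum.inl (c, w'))) w else csum x c')
  · refine Finset.sum_congr rfl fun c' _ => ?_
    by_cases h : c = c'
    · subst h
      rw [if_pos rfl, asum]
      refine Finset.sum_congr rfl fun w' _ => ?_
      by_cases h2 : H.Adj w w' <;> simp [nrLevel_adj_inl_inl, h2]
    · rw [if_neg h, csum]
      refine Finset.sum_congr rfl fun w' _ => ?_
      simp [nrLevel_adj_inl_inl, h]
  · rw [sum_ite_eq_helper c (fun _ => asum H (fun w' => x (Sum.inl (c, w'))) w) (csum x), Ssum]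
    ring

lemma asum_nrLevel_inr_false (x : ((Fin a × V) ⊕ Fin bb) → ℝ) (i : Fin bb) :
    asum (nrLevel a bb H false) x (Sum.inr i) = 0 := by
  rw [asum, Fintype.sum_sum_type]
  have h1 : (∑ p : Fin a × V, if (nrLevel a bb H false).Adj (Sum.inr i) (Sum.inl p)
      then x (Sum.inl p) else 0) = 0 :=
    Finset.sum_eq_zero fun p _ => by
      rcases p with ⟨c, w⟩; simp [nrLevel_adj_inr_inl]
  have h2 : (∑ k : Fin bb, if (nrLevel a bb H false).Adj (Sum.inr i) (Sum.inr k)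
      then x (Sum.inr k) else 0) = 0 :=
    Finset.sum_eq_zero fun k _ => by simp [nrLevel_adj_inr_inr]
  rw [h1, h2, add_zero]

lemma asum_nrLevel_inr_true (x : ((Fin a × V) ⊕ Fin bb) → ℝ) (i : Fin bb) :
    asum (nrLevel a bb H true) x (Sum.inr i) = Ssum x + (esum x - x (Sum.inr i)) := by
  rw [asum, Fintype.sum_sum_type]
  have h1 : (∑ p : Fin a × V, if (nrLevel a bb H true).Adj (Sum.inr i) (Sum.inl p)
      then x (Sum.inl p) else 0) = Ssum x := by
    rw [show Ssum x = ∑ p : Fin a × V, x (Sum.inl p) by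
      rw [Ssum, Fintype.sum_prod_type]; rfl]
    refine Finset.sum_congr rfl fun p _ => ?_
    rcases p with ⟨c, w⟩; simp [nrLevel_adj_inr_inl]
  have h2 : (∑ k : Fin bb, if (nrLevel a bb H true).Adj (Sum.inr i) (Sum.inr k)
      then x (Sum.inr k) else 0) = esum x - x (Sum.inr i) := by
    trans (∑ k : Fin bb, if i = k then 0 else x (Sum.inr k))
    · refine Finset.sum_congr rfl fun k _ => ?_
      by_cases h : i = k <;> simp [nrLevel_adj_inr_inr, h]
    · rw [sum_ite_eq_helper i (fun _ => (0:ℝ)) (fun k => x (Sum.inr k)), esum]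
      ring
  rw [h1, h2]

lemma asum_top {b : ℕ} (x : Fin b → ℝ) (w : Fin b) :
    asum (⊤ : SimpleGraph (Fin b)) x w = tot x - x w := by
  rw [asum]
  trans (∑ u : Fin b, if w = u then 0 else x u)
  · refine Finset.sum_congr rfl fun u _ => ?_
    by_cases h : w = u <;> simp [h]
  · rw [sum_ite_eq_helper w (fun _ => (0:ℝ)) x, tot]
    ring

end Levels
section Rank

/-- If membership in `Zmod G lam` is equivalent to all `a` components lying in `W` and the
extra coordinates vanishing, the dimension is `a` times that of `W`. -/
lemma finrank_Zmod_eq_mul {V : Type} [Fintype V] {a bb : ℕ}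
    (G : SimpleGraph ((Fin a × V) ⊕ Fin bb)) (lam : ℝ) (W : Submodule ℝ (V → ℝ))
    (h : ∀ x : ((Fin a × V) ⊕ Fin bb) → ℝ, x ∈ Zmod G lam ↔
      ((∀ c, (fun w => x (Sum.inl (c, w))) ∈ W) ∧ ∀ i, x (Sum.inr i) = 0)) :
    Module.finrank ℝ (Zmod G lam) = a * Module.finrank ℝ W := by
  have hemb : ∀ F : Fin a → W,
      (Sum.elim (fun cw : Fin a × V => (F cw.1).1 cw.2) (fun _ => 0) : _ → ℝ) ∈ Zmod G lam := by
    intro F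
    refine (h _).mpr ⟨fun c => ?_, fun i => rfl⟩
    show (fun w => (F c).1 w) ∈ W
    exact (F c).2
  have e : (Zmod G lam) ≃ₗ[ℝ] (Fin a → W) := by
    refine
      { toFun := fun z => fun c => ⟨fun w => z.1 (Sum.inl (c, w)), ((h z.1).mp z.2).1 c⟩
        map_add' := fun z1 z2 => rfl
        map_smul' := fun r z => rfl
        invFun := fun F => ⟨Sum.elim (fun cw : Fin a × V => (F cw.1).1 cw.2) (fun _ => 0), hemb F⟩
        left_inv := fun z => Subtype.ext (funext fun v => ?_)
        right_inv := fun F => funext fun c => Subtype.ext rfl }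
    rcases v with ⟨c, w⟩ | i
    · rfl
    · exact (((h z.1).mp z.2).2 i).symm
  rw [e.finrank_eq, Module.finrank_pi_fintype, Finset.sum_const, Finset.card_univ,
    Fintype.card_fin, smul_eq_mul]

noncomputable def totLin (m : ℕ) : (Fin m → ℝ) →ₗ[ℝ] ℝ where
  toFun := fun c => ∑ i, c i
  map_add' := fun x y => Finset.sum_add_distrib
  map_smul' := fun r x => by simp [Finset.mul_sum]

lemma finrank_ker_totLin (m : ℕ) (hm : 1 ≤ m) :
    Module.finrank ℝ (LinearMap.ker (totLin m)) = m - 1 := by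
  have hm0 : (m : ℝ) ≠ 0 := Nat.cast_ne_zero.mpr (by omega)
  have hsurj : Function.Surjective (totLin m) := by
    intro r
    refine ⟨fun _ => r / m, ?_⟩
    show ∑ _i : Fin m, r / (m:ℝ) = r
    rw [Finset.sum_const, Finset.card_univ, Fintype.card_fin, nsmul_eq_mul]
    field_simp
  have h1 := LinearMap.finrank_range_add_finrank_ker (totLin m)
  rw [LinearMap.range_eq_top.mpr hsurj, finrank_top, Module.finrank_self,
    Module.finrank_pi, Fintype.card_fin] at h1
  omega

end Rank

section Bottom

/-- Solutions on the complete graph `K_b` force `t = 0` and constancy. -/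
lemma sol_top_eq {b : ℕ} (hb : 2 ≤ b) (x : Fin b → ℝ) (t : ℝ)
    (h : Sol (⊤ : SimpleGraph (Fin b)) ((b:ℝ) - 1) x t) :
    t = 0 ∧ ∀ w, x w = tot x / b := by
  have hb0 : (b:ℝ) ≠ 0 := Nat.cast_ne_zero.mpr (by omega)
  have key : ∀ w, (b:ℝ) * x w = tot x + t := by
    intro w
    have hw := h w
    rw [asum_top] at hw
    linarith
  have hxw : ∀ w, x w = (tot x + t) / b := by
    intro w
    rw [eq_div_iff hb0]
    linarith [key w]
  have htot : tot x = (b:ℝ) * ((tot x + t) / b) := by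
    conv_lhs => rw [tot, Finset.sum_congr rfl fun w _ => hxw w]
    rw [Finset.sum_const, Finset.card_univ, Fintype.card_fin, nsmul_eq_mul]
  have ht : t = 0 := by
    rw [mul_div_cancel₀ _ hb0] at htot
    linarith
  exact ⟨ht, fun w => by rw [hxw w, ht, add_zero]⟩

lemma sol_top_const {b : ℕ} (c : ℝ) :
    Sol (⊤ : SimpleGraph (Fin b)) ((b:ℝ) - 1) (fun _ => c) 0 := by
  intro w
  rw [asum_top, tot, Finset.sum_const, Finset.card_univ, Fintype.card_fin, nsmul_eq_mul]
  ring

/-- Components of a solution of the bottom union are solutions on `K_b` with the same `t`. -/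
lemma bottom_comp {b al : ℕ} (x : ((Fin al × Fin b) ⊕ Fin 0) → ℝ) (t : ℝ)
    (hx : Sol (nrLevel al 0 (⊤ : SimpleGraph (Fin b)) false) ((b:ℝ) - 1) x t) (c : Fin al) :
    Sol (⊤ : SimpleGraph (Fin b)) ((b:ℝ) - 1) (fun w => x (Sum.inl (c, w))) t := by
  intro w
  have hv := hx (Sum.inl (c, w))
  rw [asum_nrLevel_inl_false] at hv
  exact hv

lemma bottom_sol_t {b al : ℕ} (hb : 2 ≤ b) (hal : 1 ≤ al)
    (x : ((Fin al × Fin b) ⊕ Fin 0) → ℝ) (t : ℝ)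
    (hx : Sol (nrLevel al 0 (⊤ : SimpleGraph (Fin b)) false) ((b:ℝ) - 1) x t) : t = 0 :=
  (sol_top_eq hb _ t (bottom_comp x t hx ⟨0, by omega⟩)).1

lemma bottom_mem_iff {b al : ℕ} (hb : 2 ≤ b)
    (x : ((Fin al × Fin b) ⊕ Fin 0) → ℝ) :
    x ∈ Zmod (nrLevel al 0 (⊤ : SimpleGraph (Fin b)) false) ((b:ℝ) - 1) ↔
      ((∀ c w, x (Sum.inl (c, w)) = x (Sum.inl (c, ⟨0, by omega⟩))) ∧
        (∑ c, x (Sum.inl (c, (⟨0, by omega⟩ : Fin b)))) = 0) := by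
  have hb0 : (b:ℝ) ≠ 0 := Nat.cast_ne_zero.mpr (by omega)
  constructor
  · rintro ⟨hsol, htot⟩
    have hconst : ∀ c w, x (Sum.inl (c, w)) = csum x c / b := by
      intro c w
      have h := (sol_top_eq hb _ 0 (bottom_comp x 0 hsol c)).2 w
      rw [tot_comp_inl] at h
      exact h
    have h1 : ∀ c w, x (Sum.inl (c, w)) = x (Sum.inl (c, ⟨0, by omega⟩)) := by
      intro c w; rw [hconst c w, hconst c ⟨0, by omega⟩]
    refine ⟨h1, ?_⟩
    have h2 : (∑ c, x (Sum.inl (c, (⟨0, by omega⟩ : Fin b)))) = tot x / b := by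
      rw [tot_split, show esum x = 0 by simp [esum], add_zero, Ssum, Finset.sum_div]
      exact Finset.sum_congr rfl fun c _ => hconst c _
    rw [h2, htot, zero_div]
  · rintro ⟨hconst, hsum⟩
    have hcsum : ∀ c, csum x c = (b:ℝ) * x (Sum.inl (c, ⟨0, by omega⟩)) := by
      intro c
      rw [csum, Finset.sum_congr rfl fun w _ => hconst c w, Finset.sum_const,
        Finset.card_univ, Fintype.card_fin, nsmul_eq_mul]
    constructor
    · intro v
      rcases v with ⟨c, w⟩ | i
      · have hs := sol_top_const (b := b) (x (Sum.inl (c, ⟨0, by omega⟩))) w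
        rw [show x (Sum.inl (c, w)) = x (Sum.inl (c, ⟨0, by omega⟩)) from hconst c w]
        rw [asum_nrLevel_inl_false]
        calc ((b:ℝ) - 1) * x (Sum.inl (c, ⟨0, by omega⟩))
            = asum (⊤ : SimpleGraph (Fin b)) (fun _ => x (Sum.inl (c, ⟨0, by omega⟩))) w + 0 := hs
          _ = asum (⊤ : SimpleGraph (Fin b)) (fun w' => x (Sum.inl (c, w'))) w + 0 := by
              congr 1
              rw [asum, asum]
              exact Finset.sum_congr rfl fun u _ => by
                split
                · exact (hconst c u).symm
                · rfl
      · exact Fin.elim0 i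
    · rw [tot_split, show esum x = 0 by simp [esum], add_zero, Ssum,
        Finset.sum_congr rfl fun c _ => hcsum c, ← Finset.mul_sum, hsum, mul_zero]

lemma bottom_finrank {b al : ℕ} (hb : 2 ≤ b) (hal : 1 ≤ al) :
    Module.finrank ℝ (Zmod (nrLevel al 0 (⊤ : SimpleGraph (Fin b)) false) ((b:ℝ) - 1))
      = al - 1 := by
  have hemb : ∀ F : LinearMap.ker (totLin al),
      (Sum.elim (fun cw : Fin al × Fin b => F.1 cw.1) (fun _ => 0) : _ → ℝ)
        ∈ Zmod (nrLevel al 0 (⊤ : SimpleGraph (Fin b)) false) ((b:ℝ) - 1) := by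
    intro F
    refine (bottom_mem_iff hb _).mpr ⟨fun c w => rfl, ?_⟩
    show (∑ c, F.1 c) = 0
    exact F.2
  have e : (Zmod (nrLevel al 0 (⊤ : SimpleGraph (Fin b)) false) ((b:ℝ) - 1))
      ≃ₗ[ℝ] (LinearMap.ker (totLin al)) := by
    refine
      { toFun := fun z => ⟨fun c => z.1 (Sum.inl (c, ⟨0, by omega⟩)), ?_⟩
        map_add' := fun z1 z2 => rfl
        map_smul' := fun r z => rfl
        invFun := fun F => ⟨Sum.elim (fun cw : Fin al × Fin b => F.1 cw.1) (fun _ => 0), hemb F⟩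
        left_inv := fun z => Subtype.ext (funext fun v => ?_)
        right_inv := fun F => Subtype.ext (funext fun c => rfl) }
    · have h := ((bottom_mem_iff hb z.1).mp z.2).2
      exact h
    · rcases v with ⟨c, w⟩ | i
      · exact (((bottom_mem_iff hb z.1).mp z.2).1 c w).symm
      · exact Fin.elim0 i
  rw [e.finrank_eq, finrank_ker_totLin al hal]

end Bottom
section MainInduction

/-- Alternation/size conditions on the levels above the bottom union. -/
def Alt (b : ℕ) : List (ℕ × ℕ) → Bool → Prop
  | [], j => j = false
  | p :: l', j => 0 < p.1 ∧ (if j = true then b ≤ p.2 else p.2 = 0) ∧ Alt b l' (!j)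

theorem main_ind (b al : ℕ) (hb : 2 ≤ b) (hal : 1 ≤ al) :
    ∀ (l : List (ℕ × ℕ)) (j : Bool), Alt b l j →
    ∃ σ τ : ℝ, 0 < σ ∧ τ ≤ 0 ∧ 0 < σ + τ ∧ (l ≠ [] → τ < 0) ∧
      (∀ x t, Sol (nrCotreeGraph (l ++ [(al, 0)]) b j) ((b:ℝ) - 1) x t →
        ∃ γ : ℝ, t = τ * γ ∧ tot x = σ * γ) ∧
      Module.finrank ℝ (Zmod (nrCotreeGraph (l ++ [(al, 0)]) b j) ((b:ℝ) - 1))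
        = (l.map Prod.fst).prod * (al - 1) := by
  intro l
  induction l with
  | nil =>
    intro j hAlt
    have hj : j = false := hAlt
    subst hj
    refine ⟨1, 0, one_pos, le_refl 0, by norm_num, fun h => absurd rfl h, ?_, ?_⟩
    · intro x t hx
      have ht : t = 0 := bottom_sol_t hb hal x t hx
      exact ⟨tot x, by rw [zero_mul, ht], by rw [one_mul]⟩
    · have h := bottom_finrank (b := b) (al := al) hb hal
      simp only [List.nil_append, List.map_nil, List.prod_nil, one_mul]
      exact h
  | cons p l' ih =>
    intro j hAlt
    obtain ⟨a, bbv⟩ := p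
    obtain ⟨hpos, hcond, hAlt'⟩ := hAlt
    have ha1 : (1:ℝ) ≤ (a:ℝ) := by exact_mod_cast hpos
    have ha0 : (0:ℝ) < (a:ℝ) := by linarith
    have hB2 : (2:ℝ) ≤ (b:ℝ) := by exact_mod_cast hb
    have hB0 : (0:ℝ) < (b:ℝ) := by linarith
    have hB0ne : (b:ℝ) ≠ 0 := ne_of_gt hB0
    cases j with
    | false =>
      -- union level
      obtain ⟨σ0, τ0, hσ0, hτ0le, hστ0, hτ0neg, hcont0, hrank0⟩ := ih true hAlt'
      have hbb0 : bbv = 0 := by simpa using hcond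
      subst hbb0
      have hl' : l' ≠ [] := by
        intro h; subst h; exact Bool.noConfusion hAlt'
      have hτ0 : τ0 < 0 := hτ0neg hl'
      have hτ0ne : τ0 ≠ 0 := ne_of_lt hτ0
      have haσ : σ0 ≤ (a:ℝ) * σ0 := by nlinarith
      suffices h : ∃ σ τ : ℝ, 0 < σ ∧ τ ≤ 0 ∧ 0 < σ + τ ∧ (((a, 0) :: l' : List (ℕ × ℕ)) ≠ [] → τ < 0) ∧
          (∀ (x : ((Fin a × nrVertex (l' ++ [(al, 0)]) b) ⊕ Fin 0) → ℝ) (t : ℝ),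
            Sol (nrLevel a 0 (nrCotreeGraph (l' ++ [(al, 0)]) b true) false) ((b:ℝ) - 1) x t →
              ∃ γ : ℝ, t = τ * γ ∧ tot x = σ * γ) ∧
          Module.finrank ℝ
              (Zmod (nrLevel a 0 (nrCotreeGraph (l' ++ [(al, 0)]) b true) false) ((b:ℝ) - 1))
            = (((a, 0) :: l').map Prod.fst).prod * (al - 1) by exact h
      refine ⟨(a:ℝ) * σ0, τ0, mul_pos ha0 hσ0, hτ0le, by linarith, fun _ => hτ0, ?_, ?_⟩
      · -- containment
        intro x t hx
        have hcomp : ∀ c : Fin a, Sol (nrCotreeGraph (l' ++ [(al, 0)]) b true) ((b:ℝ) - 1)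
            (fun w => x (Sum.inl (c, w))) t := by
          intro c w
          have hv := hx (Sum.inl (c, w))
          rw [asum_nrLevel_inl_false] at hv
          exact hv
        choose g hg1 hg2 using fun c => hcont0 _ _ (hcomp c)
        refine ⟨t / τ0, by field_simp, ?_⟩
        have hgc : ∀ c, g c = t / τ0 := by
          intro c; rw [eq_div_iff hτ0ne]; linarith [hg1 c]
        have htot : tot x = ∑ _c : Fin a, σ0 * (t / τ0) := by
          rw [tot_split, show esum x = 0 by simp [esum], add_zero, Ssum]
          refine Finset.sum_congr rfl fun c _ => ?_
          rw [← tot_comp_inl x c, hg2 c, hgc c]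
        rw [htot, Finset.sum_const, Finset.card_univ, Fintype.card_fin, nsmul_eq_mul]
        ring
      · -- finrank
        have hchar : ∀ y : ((Fin a × (nrVertex (l' ++ [(al, 0)]) b)) ⊕ Fin 0) → ℝ,
            y ∈ Zmod (nrLevel a 0 (nrCotreeGraph (l' ++ [(al, 0)]) b true) false) ((b:ℝ) - 1) ↔
              ((∀ c, (fun w => y (Sum.inl (c, w)))
                  ∈ Zmod (nrCotreeGraph (l' ++ [(al, 0)]) b true) ((b:ℝ) - 1))
                ∧ ∀ i : Fin 0, y (Sum.inr i) = 0) := by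
          intro y
          constructor
          · rintro ⟨hsol, htot⟩
            refine ⟨fun c => ?_, fun i => Fin.elim0 i⟩
            have hsolc : Sol (nrCotreeGraph (l' ++ [(al, 0)]) b true) ((b:ℝ) - 1)
                (fun w => y (Sum.inl (c, w))) 0 := by
              intro w
              have hv := hsol (Sum.inl (c, w))
              rw [asum_nrLevel_inl_false] at hv
              exact hv
            refine ⟨hsolc, ?_⟩
            obtain ⟨γ, hγ1, hγ2⟩ := hcont0 _ _ hsolc
            have hγ0 : γ = 0 := by
              rcases mul_eq_zero.mp hγ1.symm with h | h
              · exact absurd h hτ0ne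
              · exact h
            rw [hγ2, hγ0, mul_zero]
          · rintro ⟨hc, _⟩
            constructor
            · intro v
              rcases v with ⟨c, w⟩ | i
              · show ((b:ℝ) - 1) * y (Sum.inl (c, w))
                  = asum (nrLevel a 0 (nrCotreeGraph (l' ++ [(al, 0)]) b true) false) y
                      (Sum.inl (c, w)) + 0
                rw [asum_nrLevel_inl_false]
                exact (hc c).1 w
              · exact Fin.elim0 i
            · rw [tot_split, show esum y = 0 by simp [esum], add_zero, Ssum]
              rw [Finset.sum_congr rfl fun c _ => ((tot_comp_inl y c).symm.trans ((hc c).2))]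
              simp
        have hr := finrank_Zmod_eq_mul _ ((b:ℝ) - 1) _ hchar
        rw [hr, hrank0, List.map_cons, List.prod_cons, mul_assoc]
    | true =>
      -- join level
      obtain ⟨σ0, τ0, hσ0, hτ0le, hστ0, hτ0neg, hcont0, hrank0⟩ := ih false hAlt'
      have hbb : b ≤ bbv := by simpa using hcond
      have hBB : (b:ℝ) ≤ (bbv:ℝ) := by exact_mod_cast hbb
      have hBB0 : (0:ℝ) < (bbv:ℝ) := lt_of_lt_of_le hB0 hBB
      have hστ0ne : σ0 + τ0 ≠ 0 := ne_of_gt hστ0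
      set σ : ℝ := ((a:ℝ) * (b:ℝ) * σ0 + (bbv:ℝ) * (σ0 + τ0)) / (b:ℝ) with hσdef
      set τ : ℝ := (((b:ℝ) - (bbv:ℝ)) * (σ0 + τ0) - (a:ℝ) * (b:ℝ) * σ0) / (b:ℝ) with hτdef
      have hσpos : 0 < σ := by
        apply div_pos _ hB0
        nlinarith [mul_pos (mul_pos ha0 hB0) hσ0, mul_pos hBB0 hστ0]
      have hτneg : τ < 0 := by
        apply div_neg_of_neg_of_pos _ hB0
        nlinarith [mul_pos (mul_pos ha0 hB0) hσ0,
          mul_nonneg (sub_nonneg.mpr hBB) (le_of_lt hστ0)]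
      have hsum : σ + τ = σ0 + τ0 := by
        rw [hσdef, hτdef]
        field_simp
        ring
      suffices h : ∃ σ' τ' : ℝ, 0 < σ' ∧ τ' ≤ 0 ∧ 0 < σ' + τ' ∧
          (((a, bbv) :: l' : List (ℕ × ℕ)) ≠ [] → τ' < 0) ∧
          (∀ (x : ((Fin a × nrVertex (l' ++ [(al, 0)]) b) ⊕ Fin bbv) → ℝ) (t : ℝ),
            Sol (nrLevel a bbv (nrCotreeGraph (l' ++ [(al, 0)]) b false) true) ((b:ℝ) - 1) x t →
              ∃ γ : ℝ, t = τ' * γ ∧ tot x = σ' * γ) ∧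
          Module.finrank ℝ
              (Zmod (nrLevel a bbv (nrCotreeGraph (l' ++ [(al, 0)]) b false) true) ((b:ℝ) - 1))
            = (((a, bbv) :: l').map Prod.fst).prod * (al - 1) by exact h
      refine ⟨σ, τ, hσpos, le_of_lt hτneg, by rw [hsum]; exact hστ0, fun _ => hτneg, ?_, ?_⟩
      · -- containment
        intro x t hx
        have hext : ∀ i : Fin bbv, (b:ℝ) * x (Sum.inr i) = Ssum x + esum x + t := by
          intro i
          have hv := hx (Sum.inr i)
          rw [asum_nrLevel_inr_true] at hv
          linear_combination hv
        set δ : ℝ := (Ssum x + esum x + t) / (b:ℝ) with hδdef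
        have hBδ : (b:ℝ) * δ = Ssum x + esum x + t := by
          rw [hδdef]; field_simp
        have hδ : ∀ i, x (Sum.inr i) = δ := by
          intro i
          have h2 : (b:ℝ) * x (Sum.inr i) = (b:ℝ) * δ := by rw [hBδ]; exact hext i
          exact mul_left_cancel₀ hB0ne h2
        have hesum : esum x = (bbv:ℝ) * δ := by
          rw [esum, Finset.sum_congr rfl fun i _ => hδ i, Finset.sum_const,
            Finset.card_univ, Fintype.card_fin, nsmul_eq_mul]
        have hcomp : ∀ c : Fin a, Sol (nrCotreeGraph (l' ++ [(al, 0)]) b false) ((b:ℝ) - 1)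
            (fun w => x (Sum.inl (c, w))) (Ssum x - csum x c + esum x + t) := by
          intro c w
          show ((b:ℝ) - 1) * x (Sum.inl (c, w))
            = asum (nrCotreeGraph (l' ++ [(al, 0)]) b false) (fun w' => x (Sum.inl (c, w'))) w
              + (Ssum x - csum x c + esum x + t)
          have hv := hx (Sum.inl (c, w))
          rw [asum_nrLevel_inl_true] at hv
          linear_combination hv
        choose g hg1 hg2 using fun c => hcont0 _ _ (hcomp c)
        have hg2' : ∀ c, csum x c = σ0 * g c := by
          intro c; rw [← tot_comp_inl x c]; exact hg2 c
        have hkey : ∀ c, (σ0 + τ0) * g c = (b:ℝ) * δ := by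
          intro c
          linear_combination - (hg2' c) - (hg1 c) - hBδ
        set γ : ℝ := (b:ℝ) * δ / (σ0 + τ0) with hγdef
        have hγeq : (σ0 + τ0) * γ = (b:ℝ) * δ := by
          rw [hγdef]; field_simp
        have hgc : ∀ c, g c = γ := by
          intro c
          have h3 := hkey c
          rw [← hγeq] at h3
          exact mul_left_cancel₀ hστ0ne h3
        have hS : Ssum x = (a:ℝ) * (σ0 * γ) := by
          rw [Ssum, Finset.sum_congr rfl fun c _ => by rw [hg2' c, hgc c],
            Finset.sum_const, Finset.card_univ, Fintype.card_fin, nsmul_eq_mul]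
        have hδval : δ = (σ0 + τ0) * γ / (b:ℝ) := by
          rw [eq_div_iff hB0ne]
          linarith [hγeq]
        refine ⟨γ, ?_, ?_⟩
        · have ht : t = (b:ℝ) * δ - Ssum x - esum x := by linarith [hBδ]
          rw [ht, hS, hesum, hδval, hτdef]
          field_simp
          ring
        · rw [tot_split, hS, hesum, hδval, hσdef]
          field_simp
      · -- finrank
        have hchar : ∀ y : ((Fin a × (nrVertex (l' ++ [(al, 0)]) b)) ⊕ Fin bbv) → ℝ,
            y ∈ Zmod (nrLevel a bbv (nrCotreeGraph (l' ++ [(al, 0)]) b false) true) ((b:ℝ) - 1) ↔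
              ((∀ c, (fun w => y (Sum.inl (c, w)))
                  ∈ Zmod (nrCotreeGraph (l' ++ [(al, 0)]) b false) ((b:ℝ) - 1))
                ∧ ∀ i : Fin bbv, y (Sum.inr i) = 0) := by
          intro y
          constructor
          · rintro ⟨hsol, htot⟩
            have hSe : Ssum y + esum y = 0 := by rw [← tot_split]; exact htot
            have hext0 : ∀ i, y (Sum.inr i) = 0 := by
              intro i
              have hv := hsol (Sum.inr i)
              rw [asum_nrLevel_inr_true] at hv
              have hB : (b:ℝ) * y (Sum.inr i) = 0 := by linear_combination hv + hSe
              rcases mul_eq_zero.mp hB with h | h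
              · exact absurd h hB0ne
              · exact h
            have hesum0 : esum y = 0 := by
              rw [esum]; exact Finset.sum_eq_zero fun i _ => hext0 i
            have hSsum0 : Ssum y = 0 := by linarith
            refine ⟨fun c => ?_, hext0⟩
            have hsolc : Sol (nrCotreeGraph (l' ++ [(al, 0)]) b false) ((b:ℝ) - 1)
                (fun w => y (Sum.inl (c, w))) (Ssum y - csum y c + esum y + 0) := by
              intro w
              show ((b:ℝ) - 1) * y (Sum.inl (c, w))
                = asum (nrCotreeGraph (l' ++ [(al, 0)]) b false) (fun w' => y (Sum.inl (c, w'))) w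
                  + (Ssum y - csum y c + esum y + 0)
              have hv := hsol (Sum.inl (c, w))
              rw [asum_nrLevel_inl_true] at hv
              linear_combination hv
            obtain ⟨γc, hγ1, hγ2⟩ := hcont0 _ _ hsolc
            have hγ2' : csum y c = σ0 * γc := by
              rw [← tot_comp_inl y c]; exact hγ2
            have hγc0 : γc = 0 := by
              have hz : (σ0 + τ0) * γc = 0 := by
                linear_combination - hγ1 - hγ2' + hSsum0 + hesum0
              rcases mul_eq_zero.mp hz with h | h
              · exact absurd h hστ0ne
              · exact h
            have hcs0 : csum y c = 0 := by rw [hγ2', hγc0, mul_zero]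
            have htc : Ssum y - csum y c + esum y + 0 = 0 := by
              rw [hSsum0, hesum0, hcs0]; ring
            refine ⟨htc ▸ hsolc, ?_⟩
            rw [tot_comp_inl y c]
            exact hcs0
          · rintro ⟨hc, hi⟩
            have hcsum0 : ∀ c, csum y c = 0 := fun c =>
              ((tot_comp_inl y c).symm).trans (hc c).2
            have hesum0 : esum y = 0 := by
              rw [esum]; exact Finset.sum_eq_zero fun i _ => hi i
            have hSsum0 : Ssum y = 0 := by
              rw [Ssum]; exact Finset.sum_eq_zero fun c _ => hcsum0 c
            constructor
            · intro v
              rcases v with ⟨c, w⟩ | i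
              · show ((b:ℝ) - 1) * y (Sum.inl (c, w))
                  = asum (nrLevel a bbv (nrCotreeGraph (l' ++ [(al, 0)]) b false) true) y
                      (Sum.inl (c, w)) + 0
                rw [asum_nrLevel_inl_true, hcsum0 c, hesum0, hSsum0]
                have hw := (hc c).1 w
                linear_combination hw
              · show ((b:ℝ) - 1) * y (Sum.inr i)
                  = asum (nrLevel a bbv (nrCotreeGraph (l' ++ [(al, 0)]) b false) true) y
                      (Sum.inr i) + 0
                rw [asum_nrLevel_inr_true, hSsum0, hesum0, hi i]
                ring
            · rw [tot_split, hSsum0, hesum0, add_zero]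
        have hr := finrank_Zmod_eq_mul _ ((b:ℝ) - 1) _ hchar
        rw [hr, hrank0, List.map_cons, List.prod_cons, mul_assoc]

end MainInduction
section Assemble

open scoped Classical

lemma buildAlt (b : ℕ) : ∀ (l : List (ℕ × ℕ)) (j : Bool),
    (∀ p ∈ l, 0 < p.1) →
    (∀ i (h : i < l.length), i % 2 = (if j = true then 0 else 1) → b ≤ l[i].2) →
    (∀ i (h : i < l.length), i % 2 = (if j = true then 1 else 0) → l[i].2 = 0) →
    l.length % 2 = (if j = true then 1 else 0) →
    Alt b l j := by
  intro l
  induction l with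
  | nil =>
    intro j _ _ _ hlen
    cases j
    · exact rfl
    · simp at hlen
  | cons p l' ih =>
    intro j hpos h1 h2 hlen
    refine ⟨hpos p (List.mem_cons_self), ?_, ?_⟩
    · cases j
      · simp only [if_neg (by simp : ¬(false = true))]
        have := h2 0 (by simp) (by simp)
        simpa using this
      · simp only [if_pos rfl]
        have := h1 0 (by simp) (by simp)
        simpa using this
    · apply ih (!j)
      · intro q hq; exact hpos q (List.mem_cons_of_mem _ hq)
      · intro i h hi
        have hlt : i + 1 < (p :: l').length := by simpa using Nat.succ_lt_succ h
        have := h1 (i + 1) hlt (by cases j <;> simp at hi ⊢ <;> omega)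
        simpa using this
      · intro i h hi
        have hlt : i + 1 < (p :: l').length := by simpa using Nat.succ_lt_succ h
        have := h2 (i + 1) hlt (by cases j <;> simp at hi ⊢ <;> omega)
        simpa using this
      · cases j <;> simp at hlen ⊢ <;> omega

lemma adjMatrix_mulVec_eq_asum {V : Type} [Fintype V] (G : SimpleGraph V) [DecidableRel G.Adj]
    (x : V → ℝ) (v : V) :
    (SimpleGraph.adjMatrix ℝ G).mulVec x v = asum G x v := by
  rw [SimpleGraph.adjMatrix_mulVec_apply, asum, SimpleGraph.neighborFinset_eq_filter,
    Finset.sum_filter]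
  exact Finset.sum_congr rfl fun u _ => by by_cases h : G.Adj v u <;> simp [h]

lemma eigMult_eq_finrank_Zmod {V : Type} [Fintype V] (G : SimpleGraph V) (lam : ℝ)
    (hker : ∀ x, Sol G lam x 0 → tot x = 0) :
    eigMult G lam = Module.finrank ℝ (Zmod G lam) := by
  letI := Classical.decEq V
  letI : DecidableRel G.Adj := Classical.decRel _
  have hHerm : (SimpleGraph.adjMatrix ℝ G).IsHermitian := by
    show (SimpleGraph.adjMatrix ℝ G).conjTranspose = SimpleGraph.adjMatrix ℝ G
    ext i j
    simp only [Matrix.conjTranspose_apply, SimpleGraph.adjMatrix_apply]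
    by_cases h : G.Adj i j
    · rw [if_pos h.symm, if_pos h, star_one]
    · rw [if_neg (fun hh : G.Adj j i => h hh.symm), if_neg h, star_zero]
  have h1 : eigMult G lam
      = Module.finrank ℝ (LinearMap.ker ((SimpleGraph.adjMatrix ℝ G) - lam • 1).mulVecLin) :=
    rootMultiplicity_eq_finrank_ker _ hHerm lam
  have h2 : LinearMap.ker ((SimpleGraph.adjMatrix ℝ G) - lam • 1).mulVecLin = Zmod G lam := by
    ext x
    rw [LinearMap.mem_ker, Matrix.mulVecLin_apply, mem_Zmod_iff]
    constructor
    · intro h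
      have hsol : Sol G lam x 0 := by
        intro v
        have hv := congrFun h v
        rw [Matrix.sub_mulVec, Matrix.smul_mulVec, Matrix.one_mulVec] at hv
        have hv' : (SimpleGraph.adjMatrix ℝ G).mulVec x v - lam * x v = 0 := by
          simpa using hv
        rw [adjMatrix_mulVec_eq_asum] at hv'
        linarith [hv']
      exact ⟨hsol, hker x hsol⟩
    · rintro ⟨hsol, _⟩
      funext v
      rw [Matrix.sub_mulVec, Matrix.smul_mulVec, Matrix.one_mulVec]
      have hv := hsol v
      rw [← adjMatrix_mulVec_eq_asum (G := G)] at hv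
      show (SimpleGraph.adjMatrix ℝ G).mulVec x v - (lam • x) v = 0
      simp only [Pi.smul_apply, smul_eq_mul]
      linarith [hv]
  rw [h1, h2]

end Assemble

theorem multiplicity_b_sub_one_nonregular_balanced_cotree'
    (r : ℕ) (hr : 2 ≤ r) (hodd : Odd r)
    (ps : List (ℕ × ℕ)) (al bl : ℕ)
    (hlen : (ps ++ [(al, bl)]).length = r - 1)
    (b : ℕ) (hb : 2 ≤ b)
    (hposa : ∀ q ∈ ps ++ [(al, bl)], 0 < q.1)
    (hbeven : ∀ (i : ℕ) (h : i < (ps ++ [(al, bl)]).length),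
      Even (i + 1) → ((ps ++ [(al, bl)]).get ⟨i, h⟩).2 = 0)
    (hbodd : ∀ (i : ℕ) (h : i < (ps ++ [(al, bl)]).length),
      Odd (i + 1) → b ≤ ((ps ++ [(al, bl)]).get ⟨i, h⟩).2) :
    eigMult (nrCotreeGraph (ps ++ [(al, bl)]) b true) ((b : ℝ) - 1)
      = (ps.map Prod.fst).prod * (al - 1) := by
  obtain ⟨k, hk⟩ := hodd
  have hr3 : 3 ≤ r := by omega
  have hlps : ps.length = r - 2 := by
    rw [List.length_append, List.length_singleton] at hlen
    omega
  have hpsne : ps ≠ [] := by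
    intro h
    rw [h] at hlps
    simp at hlps
    omega
  have hble : bl = 0 := by
    have hlt : ps.length < (ps ++ [(al, bl)]).length := by
      rw [List.length_append, List.length_singleton]; omega
    have h := hbeven ps.length hlt (by rw [hlps]; exact ⟨k, by omega⟩)
    rw [List.get_eq_getElem, List.getElem_append_right (le_refl ps.length)] at h
    simpa using h
  subst hble
  have hal : 1 ≤ al := by
    have := hposa (al, 0) (by simp)
    exact this
  have hAlt : Alt b ps true := by
    apply buildAlt b ps true
    · intro p hp; exact hposa p (List.mem_append_left _ hp)
    · intro i h hi
      have hlt : i < (ps ++ [(al, 0)]).length := by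
        rw [List.length_append]; omega
      have := hbodd i hlt (by rw [Nat.odd_iff]; simp at hi; omega)
      rw [List.get_eq_getElem, List.getElem_append_left h] at this
      exact this
    · intro i h hi
      have hlt : i < (ps ++ [(al, 0)]).length := by
        rw [List.length_append]; omega
      have := hbeven i hlt (by rw [Nat.even_iff]; simp at hi; omega)
      rw [List.get_eq_getElem, List.getElem_append_left h] at this
      exact this
    · have h2 : ps.length % 2 = 1 := by omega
      simpa using h2
  obtain ⟨σ, τ, hσ, hτle, hστ, hτneg, hcont, hrank⟩ := main_ind b al hb hal ps true hAlt
  have hτ : τ < 0 := hτneg hpsne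
  have hker : ∀ x, Sol (nrCotreeGraph (ps ++ [(al, 0)]) b true) ((b:ℝ) - 1) x 0 → tot x = 0 := by
    intro x hx
    obtain ⟨γ, hγ1, hγ2⟩ := hcont x 0 hx
    have hγ0 : γ = 0 := by
      rcases mul_eq_zero.mp hγ1.symm with h | h
      · exact absurd h (ne_of_lt hτ)
      · exact h
    rw [hγ2, hγ0, mul_zero]
  rw [eigMult_eq_finrank_Zmod _ _ hker, hrank]

/-- Let `r ≥ 2` be odd and let `G` be the cograph with non-regular balanced cotree
`T_G(a_1, …, a_{r-1}, 0 | b_1, …, b_{r-1}, b)`, where the list of pairs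
`[(a_1, b_1), …, (a_{r-1}, b_{r-1})] = ps ++ [(al, bl)]` has positive first components,
`b_i = 0` for every even index `i ≤ r - 1`, `b_i ≥ b` for every odd index `i ≤ r - 1`, and
`b = b_r ≥ 2`.  Then `b - 1` is an eigenvalue of `G` with multiplicity
`m(b - 1) = a_1 a_2 ⋯ a_{r-2} (a_{r-1} - 1)`. -/
theorem multiplicity_b_sub_one_nonregular_balanced_cotree
    (r : ℕ) (hr : 2 ≤ r) (hodd : Odd r)
    (ps : List (ℕ × ℕ)) (al bl : ℕ)
    (hlen : (ps ++ [(al, bl)]).length = r - 1)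
    (b : ℕ) (hb : 2 ≤ b)
    (hposa : ∀ q ∈ ps ++ [(al, bl)], 0 < q.1)
    (hbeven : ∀ (i : ℕ) (h : i < (ps ++ [(al, bl)]).length),
      Even (i + 1) → ((ps ++ [(al, bl)]).get ⟨i, h⟩).2 = 0)
    (hbodd : ∀ (i : ℕ) (h : i < (ps ++ [(al, bl)]).length),
      Odd (i + 1) → b ≤ ((ps ++ [(al, bl)]).get ⟨i, h⟩).2) :
    eigMult (nrCotreeGraph (ps ++ [(al, bl)]) b true) ((b : ℝ) - 1)
      = (ps.map Prod.fst).prod * (al - 1) := by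
  exact multiplicity_b_sub_one_nonregular_balanced_cotree' r hr hodd ps al bl hlen b hb
    hposa hbeven hbodd
end

section
/- Let a ≥ b ≥ 2 be integers and let G = K_a ∨ ((a−1)(b−1))K_b, on n = a + b(a−1)(b−1) vertices. Then every eigenvalue of G is an integer, and the energy of G equals the energy of the complete graph K_n: E(G) = 2(n − 1). -/
open Polynomial

/-- The join of two graphs: the disjoint union together with all edges between the parts. -/
def joinG {V W : Type} (G : SimpleGraph V) (H : SimpleGraph W) : SimpleGraph (V ⊕ W) where
  Adj x y := match x, y with
    | Sum.inl a, Sum.inl b => G.Adj a b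
    | Sum.inr a, Sum.inr b => H.Adj a b
    | Sum.inl _, Sum.inr _ => True
    | Sum.inr _, Sum.inl _ => True
  symm := by
    constructor
    rintro (a | a) (c | c) h <;> simp_all [SimpleGraph.adj_comm]
  loopless := by
    constructor
    rintro (a | a) h
    · exact G.irrefl h
    · exact H.irrefl h

/-- `m` pairwise disjoint copies of `H` (no edges between distinct copies). -/
def disjCopies {V : Type} (m : ℕ) (H : SimpleGraph V) : SimpleGraph (Fin m × V) where
  Adj x y := x.1 = y.1 ∧ H.Adj x.2 y.2
  symm := by
    constructor
    rintro ⟨i, x⟩ ⟨k, y⟩ ⟨h1, h2⟩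
    exact ⟨h1.symm, h2.symm⟩
  loopless := by
    constructor
    rintro ⟨i, x⟩ ⟨_, h⟩
    exact H.irrefl h

section Helpers
open Matrix

def Jm (n : ℕ) : Matrix (Fin n) (Fin n) ℝ := Matrix.of fun _ _ => 1

def BD (n : ℕ) {k : ℕ} (M : Matrix (Fin k) (Fin k) ℝ) :
    Matrix (Fin n × Fin k) (Fin n × Fin k) ℝ :=
  Matrix.of fun p q => if p.1 = q.1 then M p.2 q.2 else 0

lemma block_decomp (a b m : ℕ) (x : ℝ)
    [DecidableRel (joinG (⊤ : SimpleGraph (Fin a)) (disjCopies m (⊤ : SimpleGraph (Fin b)))).Adj] :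
    x • (1 : Matrix (Fin a ⊕ Fin m × Fin b) (Fin a ⊕ Fin m × Fin b) ℝ)
      - SimpleGraph.adjMatrix ℝ (joinG ⊤ (disjCopies m ⊤)) =
    Matrix.fromBlocks ((x+1) • 1 - Jm a) (Matrix.of fun _ _ => -1) (Matrix.of fun _ _ => -1)
      (BD m ((x+1) • (1 : Matrix (Fin b) (Fin b) ℝ) - Jm b)) := by
  ext i j
  rw [Matrix.sub_apply, SimpleGraph.adjMatrix_apply]
  rcases i with i | ⟨k, u⟩ <;> rcases j with j | ⟨l, v⟩
  · by_cases hij : i = j <;>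
      simp [Matrix.fromBlocks, Jm, Matrix.one_apply, joinG, hij, SimpleGraph.adjMatrix_apply]
  · simp [Matrix.fromBlocks, joinG, Matrix.one_apply, SimpleGraph.adjMatrix_apply]
  · simp [Matrix.fromBlocks, joinG, Matrix.one_apply, SimpleGraph.adjMatrix_apply]
  · rcases eq_or_ne k l with hkl | hkl
    · by_cases huv : u = v <;>
        simp [Matrix.fromBlocks, Jm, BD, Matrix.one_apply, joinG, disjCopies, hkl, huv,
          Prod.ext_iff, SimpleGraph.adjMatrix_apply]
    · simp [Matrix.fromBlocks, Jm, BD, Matrix.one_apply, joinG, disjCopies, hkl,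
        Prod.ext_iff, SimpleGraph.adjMatrix_apply]
lemma Jm_mul_Jm (n : ℕ) : Jm n * Jm n = (n : ℝ) • Jm n := by
  ext i j
  simp [Jm, Matrix.mul_apply, Finset.sum_const, Finset.card_univ]

lemma det_aux (n : ℕ) (hn : 1 ≤ n) (α β : ℝ) (hα : α ≠ 0) :
    (α • (1 : Matrix (Fin n) (Fin n) ℝ) - β • Jm n).det = α ^ (n - 1) * (α - n * β) := by
  have h : α • (1 : Matrix (Fin n) (Fin n) ℝ) - β • Jm n
      = α • (1 + Matrix.replicateCol Unit (fun _ => -(β/α)) * Matrix.replicateRow Unit (fun _ => (1:ℝ))) := by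
    ext i j
    by_cases hij : i = j <;>
      · simp [Jm, Matrix.one_apply, hij, Matrix.mul_apply]
        field_simp
        try ring
  rw [h, Matrix.det_smul, Matrix.det_one_add_replicateCol_mul_replicateRow]
  simp only [dotProduct, Finset.sum_const, Finset.card_univ, Fintype.card_fin,
    nsmul_eq_mul]
  have hpow : α ^ n = α ^ (n-1) * α := by rw [← pow_succ]; congr 1; omega
  rw [hpow]
  field_simp
  ring

lemma inv_F (n : ℕ) (α : ℝ) (hα : α ≠ 0) (hαn : α - n ≠ 0) :
    (α⁻¹ • (1 : Matrix (Fin n) (Fin n) ℝ) + (α * (α - n))⁻¹ • Jm n) *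
      (α • 1 - Jm n) = 1 := by
  set d : ℝ := (α * (α - n))⁻¹ with hd
  have expand : (α⁻¹ • (1 : Matrix (Fin n) (Fin n) ℝ) + d • Jm n) * (α • 1 - Jm n)
      = (α⁻¹ * α) • (1 : Matrix (Fin n) (Fin n) ℝ)
        + (d * α - α⁻¹ - d * n) • Jm n := by
    rw [Matrix.add_mul, Matrix.mul_sub, Matrix.mul_sub]
    simp only [smul_mul_assoc, mul_smul_comm, Matrix.one_mul, Matrix.mul_one, Jm_mul_Jm,
      smul_smul]
    module
  rw [expand]
  have h1 : α⁻¹ * α = 1 := inv_mul_cancel₀ hα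
  have h2 : d * α - α⁻¹ - d * n = 0 := by
    rw [hd]
    field_simp
    ring
  rw [h1, h2, one_smul, zero_smul, add_zero]

lemma eval_charpoly' {n : Type} [Fintype n] [DecidableEq n] (M : Matrix n n ℝ) (x : ℝ) :
    M.charpoly.eval x = (x • (1 : Matrix n n ℝ) - M).det := by
  rw [Matrix.charpoly, ← Polynomial.coe_evalRingHom, RingHom.map_det]
  congr 1
  ext i j
  by_cases h : i = j <;>
    simp [Matrix.charmatrix_apply, h, Matrix.one_apply, Matrix.diagonal_apply]
lemma BD_mul (n : ℕ) {k : ℕ} (M N : Matrix (Fin k) (Fin k) ℝ) :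
    BD n M * BD n N = BD n (M * N) := by
  ext ⟨i, u⟩ ⟨j, v⟩
  rw [Matrix.mul_apply, Fintype.sum_prod_type]
  simp only [BD, Matrix.of_apply, Matrix.mul_apply, ite_mul, zero_mul, mul_ite, mul_zero]
  simp [Finset.sum_ite_eq, Finset.sum_ite_eq', eq_comm]
lemma BD_one (n k : ℕ) : BD n (1 : Matrix (Fin k) (Fin k) ℝ) = 1 := by
  ext ⟨i, u⟩ ⟨j, v⟩
  simp only [BD, Matrix.of_apply, Matrix.one_apply, Prod.ext_iff]
  split_ifs <;> simp_all

lemma BD_det (n : ℕ) {k : ℕ} (M : Matrix (Fin k) (Fin k) ℝ) :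
    (BD n M).det = M.det ^ n := by
  have h : BD n M = (Matrix.blockDiagonal fun _ : Fin n => M).submatrix
      (Equiv.prodComm (Fin n) (Fin k)) (Equiv.prodComm (Fin n) (Fin k)) := by
    ext ⟨i, u⟩ ⟨j, v⟩
    simp [BD, Matrix.blockDiagonal_apply, eq_comm]
  rw [h, Matrix.det_submatrix_equiv_self, Matrix.det_blockDiagonal]
  simp

lemma CEC (a b m : ℕ) (α : ℝ) :
    (Matrix.of fun (_ : Fin a) (_ : Fin m × Fin b) => (-1:ℝ)) *
      BD m (α⁻¹ • (1 : Matrix (Fin b) (Fin b) ℝ) + (α*(α-b))⁻¹ • Jm b) *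
      (Matrix.of fun (_ : Fin m × Fin b) (_ : Fin a) => (-1:ℝ))
    = (m * b * (α⁻¹ + b * (α*(α-b))⁻¹)) • Jm a := by
  ext i j
  rw [Matrix.mul_apply]
  have hcol : ∀ q : Fin m × Fin b,
      ((Matrix.of fun (_ : Fin a) (_ : Fin m × Fin b) => (-1:ℝ)) *
        BD m (α⁻¹ • (1 : Matrix (Fin b) (Fin b) ℝ) + (α*(α-b))⁻¹ • Jm b)) i q
      = -(α⁻¹ + b * (α*(α-b))⁻¹) := by
    rintro ⟨l, v⟩
    rw [Matrix.mul_apply, Fintype.sum_prod_type]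
    simp only [BD, Jm, Matrix.of_apply, Matrix.add_apply, Matrix.smul_apply, Matrix.one_apply,
      smul_eq_mul, mul_one, neg_mul, one_mul]
    rw [Finset.sum_comm]
    simp [Finset.sum_ite_eq, Finset.sum_ite_eq', Finset.mul_sum, Finset.sum_add_distrib,
      Finset.sum_const, mul_add]
  have hs : ∀ q : Fin m × Fin b,
      ((Matrix.of fun (_ : Fin a) (_ : Fin m × Fin b) => (-1:ℝ)) *
        BD m (α⁻¹ • (1 : Matrix (Fin b) (Fin b) ℝ) + (α*(α-b))⁻¹ • Jm b)) i q *
        (Matrix.of fun (_ : Fin m × Fin b) (_ : Fin a) => (-1:ℝ)) q j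
      = -(α⁻¹ + b * (α*(α-b))⁻¹) * (-1) := fun q => by rw [hcol q]; rfl
  rw [Finset.sum_congr rfl fun q _ => hs q]
  simp [Jm, Finset.sum_const]
  ring

lemma main_det (a b m : ℕ) (ha : 2 ≤ a) (hb : 2 ≤ b) (hm : 1 ≤ m) (x : ℝ)
    (h1 : x + 1 ≠ 0) (h2 : x + 1 - b ≠ 0)
    [DecidableRel (joinG (⊤ : SimpleGraph (Fin a)) (disjCopies m (⊤ : SimpleGraph (Fin b)))).Adj] :
    (x • (1 : Matrix (Fin a ⊕ Fin m × Fin b) (Fin a ⊕ Fin m × Fin b) ℝ)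
      - SimpleGraph.adjMatrix ℝ (joinG ⊤ (disjCopies m ⊤))).det
    = (x+1) ^ (a - 1 + m*(b-1)) * (x+1-b) ^ (m-1) * (((x+1)-a)*((x+1)-b) - a*b*m) := by
  rw [block_decomp]
  set α := x + 1 with hα
  have hα0 : α ≠ 0 := h1
  have hαb : α - b ≠ 0 := h2
  set F : Matrix (Fin b) (Fin b) ℝ := α • 1 - Jm b with hF
  set E : Matrix (Fin b) (Fin b) ℝ := α⁻¹ • 1 + (α*(α-b))⁻¹ • Jm b with hE
  have hEF : E * F = 1 := inv_F b α hα0 hαb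
  have hED : BD m E * BD m F = 1 := by rw [BD_mul, hEF, BD_one]
  haveI : Invertible (BD m F) := invertibleOfLeftInverse _ _ hED
  rw [Matrix.det_fromBlocks₂₂, invOf_eq_left_inv hED]
  rw [CEC a b m α]
  have hB : (α • (1 : Matrix (Fin a) (Fin a) ℝ) - Jm a)
      - (↑m * ↑b * (α⁻¹ + ↑b * (α * (α - ↑b))⁻¹)) • Jm a
      = α • 1 - (1 + m * b * (α⁻¹ + b * (α*(α-b))⁻¹)) • Jm a := by
    rw [sub_sub]
    module
  rw [hB, BD_det]
  rw [show F = α • (1 : Matrix (Fin b) (Fin b) ℝ) - (1:ℝ) • Jm b by rw [one_smul]]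
  rw [det_aux b (by omega) α 1 hα0, det_aux a (by omega) α _ hα0]
  have hcbd : α⁻¹ + (b:ℝ) * (α*(α-b))⁻¹ = (α - b)⁻¹ := by
    field_simp
    ring
  rw [hcbd]
  have hmsplit : (α - b) ^ m = (α - b) ^ (m-1) * (α - b) := by
    rw [← pow_succ]; congr 1; omega
  rw [mul_one, mul_pow, hmsplit, ← pow_mul]
  rw [show a - 1 + m*(b-1) = (b-1)*m + (a-1) by ring, pow_add]
  field_simp
  ring

instance joinG.decRel {V W : Type} (G : SimpleGraph V) (H : SimpleGraph W)
    [DecidableRel G.Adj] [DecidableRel H.Adj] : DecidableRel (joinG G H).Adj := fun x y =>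
  match x, y with
  | Sum.inl a, Sum.inl b => (inferInstance : Decidable (G.Adj a b))
  | Sum.inr a, Sum.inr b => (inferInstance : Decidable (H.Adj a b))
  | Sum.inl _, Sum.inr _ => (inferInstance : Decidable True)
  | Sum.inr _, Sum.inl _ => (inferInstance : Decidable True)

instance disjCopies.decRel {V : Type} (m : ℕ) (H : SimpleGraph V) [DecidableEq V]
    [DecidableRel H.Adj] : DecidableRel (disjCopies m H).Adj := fun x y =>
  inferInstanceAs (Decidable (x.1 = y.1 ∧ H.Adj x.2 y.2))

lemma charpoly_eq (a b : ℕ) (hb : 2 ≤ b) (hab : b ≤ a) :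
    graphCharpoly (joinG (⊤ : SimpleGraph (Fin a))
        (disjCopies ((a-1)*(b-1)) (⊤ : SimpleGraph (Fin b))))
      = (X - C ((a:ℝ)*b - 1)) * (X - C (-(((a:ℝ)-1)*((b:ℝ)-1))))
        * (X - C ((b:ℝ)-1)) ^ ((a-1)*(b-1)-1)
        * (X - C (-1:ℝ)) ^ (a-1+((a-1)*(b-1))*(b-1)) := by
  have ha : 2 ≤ a := le_trans hb hab
  have hm : 1 ≤ (a-1)*(b-1) := by
    have : 1 ≤ a - 1 := by omega
    have : 1 ≤ b - 1 := by omega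
    exact Nat.one_le_iff_ne_zero.mpr (by positivity)
  rw [show graphCharpoly (joinG (⊤ : SimpleGraph (Fin a))
        (disjCopies ((a-1)*(b-1)) (⊤ : SimpleGraph (Fin b))))
      = (SimpleGraph.adjMatrix ℝ (joinG (⊤ : SimpleGraph (Fin a))
        (disjCopies ((a-1)*(b-1)) (⊤ : SimpleGraph (Fin b))))).charpoly by
    unfold graphCharpoly
    congr! <;> exact Subsingleton.elim _ _]
  apply Polynomial.eq_of_infinite_eval_eq
  apply Set.Infinite.mono (s := ({-1, (b:ℝ)-1} : Set ℝ)ᶜ)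
  swap
  · exact (Set.toFinite _).infinite_compl
  intro x hx
  simp only [Set.mem_compl_iff, Set.mem_insert_iff, Set.mem_singleton_iff, not_or] at hx
  have h1 : x + 1 ≠ 0 := fun h => hx.1 (by linarith)
  have h2 : x + 1 - b ≠ 0 := fun h => hx.2 (by linarith)
  have hcast : ((((a-1)*(b-1)) : ℕ) : ℝ) = ((a:ℝ)-1)*((b:ℝ)-1) := by
    rw [Nat.cast_mul, Nat.cast_sub (by omega), Nat.cast_sub (by omega)]
    push_cast
    ring
  simp only [Set.mem_setOf_eq]
  rw [eval_charpoly', main_det a b ((a-1)*(b-1)) ha hb hm x h1 h2]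
  simp only [eval_mul, eval_pow, eval_sub, eval_X, eval_C, hcast]
  have e1 : x + 1 - b = x - ((b:ℝ)-1) := by ring
  have e2 : x - (-1 : ℝ) = x + 1 := by ring
  rw [e1, e2]
  ring

lemma roots_eq (a b : ℕ) (hb : 2 ≤ b) (hab : b ≤ a) :
    (graphCharpoly (joinG (⊤ : SimpleGraph (Fin a))
        (disjCopies ((a-1)*(b-1)) (⊤ : SimpleGraph (Fin b))))).roots
      = {(a:ℝ)*b - 1} + {-(((a:ℝ)-1)*((b:ℝ)-1))}
        + Multiset.replicate ((a-1)*(b-1)-1) ((b:ℝ)-1)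
        + Multiset.replicate (a-1+((a-1)*(b-1))*(b-1)) (-1:ℝ) := by
  have h12 : (X - C ((a:ℝ)*b - 1)) * (X - C (-(((a:ℝ)-1)*((b:ℝ)-1)))) ≠ 0 :=
    ((monic_X_sub_C _).mul (monic_X_sub_C _)).ne_zero
  have h123 : (X - C ((a:ℝ)*b - 1)) * (X - C (-(((a:ℝ)-1)*((b:ℝ)-1))))
      * (X - C ((b:ℝ)-1)) ^ ((a-1)*(b-1)-1) ≠ 0 :=
    (((monic_X_sub_C _).mul (monic_X_sub_C _)).mul ((monic_X_sub_C _).pow _)).ne_zero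
  have h1234 : (X - C ((a:ℝ)*b - 1)) * (X - C (-(((a:ℝ)-1)*((b:ℝ)-1))))
      * (X - C ((b:ℝ)-1)) ^ ((a-1)*(b-1)-1)
      * (X - C (-1:ℝ)) ^ (a-1+((a-1)*(b-1))*(b-1)) ≠ 0 :=
    ((((monic_X_sub_C _).mul (monic_X_sub_C _)).mul ((monic_X_sub_C _).pow _)).mul
      ((monic_X_sub_C _).pow _)).ne_zero
  rw [charpoly_eq a b hb hab, Polynomial.roots_mul h1234, Polynomial.roots_mul h123,
    Polynomial.roots_mul h12, Polynomial.roots_pow, Polynomial.roots_pow,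
    Polynomial.roots_X_sub_C, Polynomial.roots_X_sub_C, Polynomial.roots_X_sub_C,
    Polynomial.roots_X_sub_C, Multiset.nsmul_singleton, Multiset.nsmul_singleton]

lemma aux_main_thm (a b : ℕ) (hb : 2 ≤ b) (hab : b ≤ a) :
    (∀ lam : ℝ,
        (graphCharpoly (joinG (⊤ : SimpleGraph (Fin a))
            (disjCopies ((a - 1) * (b - 1)) (⊤ : SimpleGraph (Fin b))))).IsRoot lam →
        ∃ z : ℤ, lam = z) ∧
      graphEnergy (joinG (⊤ : SimpleGraph (Fin a))
          (disjCopies ((a - 1) * (b - 1)) (⊤ : SimpleGraph (Fin b))))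
        = 2 * (((a + b * ((a - 1) * (b - 1)) : ℕ) : ℝ) - 1) := by
  have ha : 2 ≤ a := le_trans hb hab
  have hA : (2:ℝ) ≤ (a:ℝ) := by exact_mod_cast ha
  have hB : (2:ℝ) ≤ (b:ℝ) := by exact_mod_cast hb
  have hne : graphCharpoly (joinG (⊤ : SimpleGraph (Fin a))
      (disjCopies ((a - 1) * (b - 1)) (⊤ : SimpleGraph (Fin b)))) ≠ 0 := by
    rw [charpoly_eq a b hb hab]
    exact ((((monic_X_sub_C _).mul (monic_X_sub_C _)).mul ((monic_X_sub_C _).pow _)).mul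
      ((monic_X_sub_C _).pow _)).ne_zero
  constructor
  · intro lam hroot
    have hmem : lam ∈ (graphCharpoly (joinG (⊤ : SimpleGraph (Fin a))
        (disjCopies ((a - 1) * (b - 1)) (⊤ : SimpleGraph (Fin b))))).roots :=
      (Polynomial.mem_roots hne).mpr hroot
    rw [roots_eq a b hb hab] at hmem
    simp only [Multiset.mem_add, Multiset.mem_singleton, Multiset.mem_replicate] at hmem
    rcases hmem with ((h | h) | ⟨-, h⟩) | ⟨-, h⟩
    · exact ⟨(a:ℤ)*b - 1, by rw [h]; push_cast; ring⟩
    · exact ⟨-(((a:ℤ)-1)*((b:ℤ)-1)), by rw [h]; push_cast; ring⟩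
    · exact ⟨(b:ℤ)-1, by rw [h]; push_cast; ring⟩
    · exact ⟨-1, by rw [h]; push_cast; ring⟩
  · unfold graphEnergy
    rw [roots_eq a b hb hab]
    simp only [Multiset.map_add, Multiset.map_singleton, Multiset.map_replicate,
      Multiset.sum_add, Multiset.sum_singleton, Multiset.sum_replicate, smul_eq_mul,
      nsmul_eq_mul]
    have e1 : |(a:ℝ)*b - 1| = (a:ℝ)*b - 1 := abs_of_nonneg (by nlinarith)
    have e2 : |(-(((a:ℝ)-1)*((b:ℝ)-1)))| = ((a:ℝ)-1)*((b:ℝ)-1) := by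
      rw [abs_neg]; exact abs_of_nonneg (by nlinarith)
    have e3 : |(b:ℝ)-1| = (b:ℝ)-1 := abs_of_nonneg (by linarith)
    have e4 : |(-1:ℝ)| = 1 := by norm_num
    rw [e1, e2, e3, e4]
    have c1 : (((a-1)*(b-1)-1 : ℕ) : ℝ) = ((a:ℝ)-1)*((b:ℝ)-1)-1 := by
      have h1 : 1 ≤ (a-1)*(b-1) := by
        have : 1 ≤ a - 1 := by omega
        have : 1 ≤ b - 1 := by omega
        exact Nat.one_le_iff_ne_zero.mpr (by positivity)
      rw [Nat.cast_sub h1, Nat.cast_mul, Nat.cast_sub (by omega), Nat.cast_sub (by omega)]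
      push_cast; ring
    have c2 : ((a-1+((a-1)*(b-1))*(b-1) : ℕ) : ℝ)
        = ((a:ℝ)-1) + ((a:ℝ)-1)*((b:ℝ)-1)*((b:ℝ)-1) := by
      rw [Nat.cast_add, Nat.cast_mul, Nat.cast_mul, Nat.cast_sub (by omega : 1 ≤ a),
        Nat.cast_sub (by omega : 1 ≤ b)]
      push_cast; ring
    have c3 : ((a + b*((a-1)*(b-1)) : ℕ) : ℝ) = (a:ℝ) + (b:ℝ)*(((a:ℝ)-1)*((b:ℝ)-1)) := by
      rw [Nat.cast_add, Nat.cast_mul, Nat.cast_mul, Nat.cast_sub (by omega : 1 ≤ a),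
        Nat.cast_sub (by omega : 1 ≤ b)]
      push_cast; ring
    rw [c1, c2, c3]
    ring

end Helpers

/-- Let `a ≥ b ≥ 2` and let `G = K_a ∨ ((a-1)(b-1)) K_b` be the join of the complete graph
`K_a` with the disjoint union of `(a-1)(b-1)` copies of `K_b`, on
`n = a + b (a-1)(b-1)` vertices.  Then every eigenvalue of `G` is an integer, and `G` is
borderenergetic: its energy equals the energy of the complete graph `K_n`, namely
`E(G) = 2(n - 1)`. -/
theorem integral_borderenergetic_join_Ka_copies_Kb (a b : ℕ) (hb : 2 ≤ b) (hab : b ≤ a) :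
    (∀ lam : ℝ,
        (graphCharpoly (joinG (⊤ : SimpleGraph (Fin a))
            (disjCopies ((a - 1) * (b - 1)) (⊤ : SimpleGraph (Fin b))))).IsRoot lam →
        ∃ z : ℤ, lam = z) ∧
      graphEnergy (joinG (⊤ : SimpleGraph (Fin a))
          (disjCopies ((a - 1) * (b - 1)) (⊤ : SimpleGraph (Fin b))))
        = 2 * (((a + b * ((a - 1) * (b - 1)) : ℕ) : ℝ) - 1) :=
  aux_main_thm a b hb hab
end
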